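/- arXiv:2405.08634 — 4 statements merged into one kernel-verified Lean document; each statement's English description precedes it below -/
import Mathlib

section
/- Let 0 < τ₀ ≤ τ₁, let u : [0,τ₀] → ℝ and v : [0,τ₁] → ℝ be piecewise continuous, and extend u by 0 outside [0,τ₀] and v by 0 outside [0,τ₁]. Then for every s ∈ ℂ, ∫₀^{τ₀} (∫₀^{τ₁} e^{−(r+η)s} v(η)dη) u(r)dr = ∫₀^{τ₀} (∫₀^ν v(η)u(ν−η)dη) e^{−νs}dν + ∫_{τ₀}^{τ₁} (∫_{ν−τ₀}^ν v(η)u(ν−η)dη) e^{−νs}dν + ∫_{τ₁}^{τ₁+τ₀} (∫_{ν−τ₀}^{τ₁} v(η)u(ν−η)dη) e^{−νs}dν. -/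
open MeasureTheory Set

noncomputable section

/-- `f` is piecewise continuous on `[a,b]`: continuous off a finite set and bounded. -/
def PwContOn (f : ℝ → ℝ) (a b : ℝ) : Prop :=
  (∃ S : Finset ℝ, ContinuousOn f (Set.Icc a b \ ↑S)) ∧
    ∃ C : ℝ, ∀ x ∈ Set.Icc a b, |f x| ≤ C

/-- `f` is piecewise continuously differentiable on `[a,b]`. -/
def PwC1On (f : ℝ → ℝ) (a b : ℝ) : Prop :=
  PwContOn f a b ∧
    ∃ S : Finset ℝ, DifferentiableOn ℝ f (Set.Icc a b \ ↑S) ∧ PwContOn (deriv f) a b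

/-- Sup norm of the partial trajectory `θ ∈ [-τ,0] ↦ φ(t+θ)`. -/
def wNorm (φ : ℝ → ℝ) (τ t : ℝ) : ℝ :=
  sSup ((fun θ => |φ (t + θ)|) '' Set.Icc (-τ) 0)

/-- `F₀(s) = 1 - a e^{-τ₀ s} - ∫₀^{τ₀} N(ν) e^{-ν s} dν`. -/
def F0 (a τ₀ : ℝ) (N : ℝ → ℝ) (s : ℂ) : ℂ :=
  1 - (a : ℂ) * Complex.exp (-(τ₀ : ℂ) * s)
    - ∫ ν in (0:ℝ)..τ₀, (N ν : ℂ) * Complex.exp (-(ν : ℂ) * s)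

/-- `F₁(s) = b e^{-τ₁ s} + ∫₀^{τ₁} M(ν) e^{-ν s} dν`. -/
def F1 (b τ₁ : ℝ) (M : ℝ → ℝ) (s : ℂ) : ℂ :=
  (b : ℂ) * Complex.exp (-(τ₁ : ℂ) * s)
    + ∫ ν in (0:ℝ)..τ₁, (M ν : ℂ) * Complex.exp (-(ν : ℂ) * s)

/-- `I₁(ν)`, for `ν ∈ [0,τ₀]`. -/
def I1 (N M f g : ℝ → ℝ) (ν : ℝ) : ℝ :=
  g ν + N ν + (∫ η in (0:ℝ)..ν, f η * M (ν - η)) - ∫ η in (0:ℝ)..ν, g η * N (ν - η)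

/-- `I₂(ν)`, for `ν ∈ (τ₀,τ₁]`. -/
def I2 (a τ₀ : ℝ) (N M f g : ℝ → ℝ) (ν : ℝ) : ℝ :=
  g ν - a * g (ν - τ₀) + (∫ η in (0:ℝ)..τ₀, f η * M (ν - η))
    - ∫ η in (ν - τ₀)..ν, g η * N (ν - η)

/-- `I₃(ν)`, for `ν ∈ [τ₁,τ₀+τ₁]`. -/
def I3 (a b τ₀ τ₁ : ℝ) (N M f g : ℝ → ℝ) (ν : ℝ) : ℝ :=
  b * f (ν - τ₁) + (∫ η in (ν - τ₁)..τ₀, f η * M (ν - η))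
    - a * g (ν - τ₀) - ∫ η in (ν - τ₀)..τ₁, g η * N (ν - η)

lemma pw_aesm {f : ℝ → ℝ} {a b : ℝ} (hf : PwContOn f a b)
    (hf0 : ∀ x, x ∉ Set.Icc a b → f x = 0) : AEStronglyMeasurable f (volume : Measure ℝ) := by
  obtain ⟨⟨S, hcont⟩, C, hC⟩ := hf
  have hSnull : (volume : Measure ℝ) (↑S : Set ℝ) = 0 := (S.finite_toSet.measure_zero _)
  have hmeas : MeasurableSet (Set.Icc a b \ ↑S) :=
    measurableSet_Icc.diff S.finite_toSet.measurableSet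
  have h1 : AEMeasurable f (volume.restrict (Set.Icc a b \ ↑S)) := hcont.aemeasurable hmeas
  have hae : (Set.Icc a b \ ↑S : Set ℝ) =ᵐ[volume] (Set.Icc a b : Set ℝ) := by
    refine (MeasureTheory.diff_ae_eq_self).2 ?_
    exact measure_mono_null Set.inter_subset_right hSnull
  have h2 : AEMeasurable f (volume.restrict (Set.Icc a b)) := by
    rwa [Measure.restrict_congr_set hae] at h1
  have h3 : AEMeasurable ((Set.Icc a b).indicator f) (volume : Measure ℝ) :=
    (aemeasurable_indicator_iff measurableSet_Icc).2 h2
  have h4 : f = (Set.Icc a b).indicator f := by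
    funext x
    by_cases hx : x ∈ Set.Icc a b
    · simp [Set.indicator_of_mem hx]
    · simp [Set.indicator_of_notMem hx, hf0 x hx]
  rw [h4]
  exact h3.aestronglyMeasurable

lemma supp_interval_integral {E : Type*} [NormedAddCommGroup E] [NormedSpace ℝ E]
    {f : ℝ → E} {c d : ℝ} (hcd : c ≤ d) (h0 : ∀ x, x ∉ Set.Icc c d → f x = 0) :
    (∫ x in c..d, f x) = ∫ x, f x := by
  rw [intervalIntegral.integral_of_le hcd, ← integral_Icc_eq_integral_Ioc,
    setIntegral_eq_integral_of_forall_compl_eq_zero h0]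

lemma pw_int_exp {f : ℝ → ℝ} {a b : ℝ} (hf : PwContOn f a b)
    (hf0 : ∀ x, x ∉ Set.Icc a b → f x = 0) (s : ℂ) :
    Integrable (fun x : ℝ => Complex.exp (-(x:ℂ) * s) * (f x : ℂ)) volume := by
  obtain ⟨-, C, hC⟩ := id hf
  set D := Real.exp ((|a| + |b|) * |s.re|) with hD
  have hsm : AEStronglyMeasurable (fun x : ℝ => Complex.exp (-(x:ℂ) * s) * (f x : ℂ)) volume := by
    refine AEStronglyMeasurable.mul ?_ ?_
    · exact (Complex.continuous_exp.comp (Complex.continuous_ofReal.neg.mul continuous_const)).aestronglyMeasurable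
    · exact Complex.continuous_ofReal.comp_aestronglyMeasurable (pw_aesm hf hf0)
  refine Integrable.mono' (g := (Set.Icc a b).indicator (fun _ => D * C)) ?_ hsm ?_
  · rw [integrable_indicator_iff measurableSet_Icc]
    exact integrableOn_const measure_Icc_lt_top.ne enorm_ne_top
  · refine Filter.Eventually.of_forall fun x => ?_
    by_cases hx : x ∈ Set.Icc a b
    · rw [Set.indicator_of_mem hx]
      have hxb : |x| ≤ |a| + |b| := by
        obtain ⟨h1, h2⟩ := hx
        rw [abs_le]
        constructor <;> nlinarith [neg_abs_le a, le_abs_self b, abs_nonneg a, abs_nonneg b]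
      have hexp : Real.exp ((-(x:ℂ) * s).re) ≤ D := by
        rw [hD]
        apply Real.exp_le_exp.2
        have : (-(x:ℂ) * s).re = -(x * s.re) := by simp [Complex.mul_re]
        rw [this]
        calc -(x * s.re) ≤ |x * s.re| := neg_le_abs _
          _ = |x| * |s.re| := abs_mul _ _
          _ ≤ (|a| + |b|) * |s.re| := by
              exact mul_le_mul_of_nonneg_right hxb (abs_nonneg _)
      have : ‖Complex.exp (-(x:ℂ) * s) * (f x : ℂ)‖
          = Real.exp ((-(x:ℂ) * s).re) * |f x| := by
        simp [norm_mul, Complex.norm_exp, Complex.norm_real]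
      rw [this]
      exact mul_le_mul hexp (hC x hx) (abs_nonneg _) (Real.exp_pos _).le
    · rw [Set.indicator_of_notMem hx]
      simp [hf0 x hx]

/-- **Fubini rearrangement of the double convolution integral.** For `u` supported in
`[0,τ₀]` and `v` supported in `[0,τ₁]` (piecewise continuous, extended by zero), and
any `s ∈ ℂ`,
`∫₀^{τ₀} (∫₀^{τ₁} e^{-(r+η)s} v(η) dη) u(r) dr` splits into the three convolution
pieces over `[0,τ₀]`, `[τ₀,τ₁]` and `[τ₁,τ₁+τ₀]`. -/
theorem stmt6
    (τ₀ τ₁ : ℝ) (u v : ℝ → ℝ)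
    (hτ₀ : 0 < τ₀) (hττ : τ₀ ≤ τ₁)
    (hu : PwContOn u 0 τ₀) (hv : PwContOn v 0 τ₁)
    (hu0 : ∀ x, x ∉ Set.Icc 0 τ₀ → u x = 0)
    (hv0 : ∀ x, x ∉ Set.Icc 0 τ₁ → v x = 0)
    (s : ℂ) :
    (∫ r in (0:ℝ)..τ₀, (∫ η in (0:ℝ)..τ₁, Complex.exp (-((r:ℂ) + (η:ℂ)) * s) * (v η : ℂ))
        * (u r : ℂ))
      = (∫ ν in (0:ℝ)..τ₀,
          ((∫ η in (0:ℝ)..ν, v η * u (ν - η) : ℝ) : ℂ) * Complex.exp (-(ν:ℂ) * s))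
      + (∫ ν in τ₀..τ₁,
          ((∫ η in (ν - τ₀)..ν, v η * u (ν - η) : ℝ) : ℂ) * Complex.exp (-(ν:ℂ) * s))
      + ∫ ν in τ₁..(τ₁ + τ₀),
          ((∫ η in (ν - τ₀)..τ₁, v η * u (ν - η) : ℝ) : ℂ) * Complex.exp (-(ν:ℂ) * s) := by
  have hτ₁ : (0:ℝ) ≤ τ₁ := hτ₀.le.trans hττ
  set Fc : ℝ → ℂ := fun r => Complex.exp (-(r:ℂ) * s) * (u r : ℂ) with hFc_def
  set Gc : ℝ → ℂ := fun η => Complex.exp (-(η:ℂ) * s) * (v η : ℂ) with hGc_def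
  have hFc : Integrable Fc volume := pw_int_exp hu hu0 s
  have hGc : Integrable Gc volume := pw_int_exp hv hv0 s
  set IF : ℂ := ∫ r, Fc r with hIF_def
  set IG : ℂ := ∫ η, Gc η with hIG_def
  -- vanishing of Fc, Gc off the supports
  have hFc0 : ∀ x, x ∉ Set.Icc 0 τ₀ → Fc x = 0 := by
    intro x hx; simp [hFc_def, hu0 x hx]
  have hGc0 : ∀ x, x ∉ Set.Icc 0 τ₁ → Gc x = 0 := by
    intro x hx; simp [hGc_def, hv0 x hx]
  -- exp splitting
  have hexp : ∀ ν η : ℝ, Complex.exp (-(η:ℂ) * s) * Complex.exp (-((ν - η : ℝ):ℂ) * s)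
      = Complex.exp (-(ν:ℂ) * s) := by
    intro ν η
    rw [← Complex.exp_add]
    congr 1
    push_cast
    ring
  -- LHS = IG * IF
  have hLHS : (∫ r in (0:ℝ)..τ₀,
      (∫ η in (0:ℝ)..τ₁, Complex.exp (-((r:ℂ) + (η:ℂ)) * s) * (v η : ℂ)) * (u r : ℂ))
      = IG * IF := by
    have h1 : ∀ r : ℝ,
        (∫ η in (0:ℝ)..τ₁, Complex.exp (-((r:ℂ) + (η:ℂ)) * s) * (v η : ℂ))
          = Complex.exp (-(r:ℂ) * s) * IG := by
      intro r
      have : ∀ η : ℝ, Complex.exp (-((r:ℂ) + (η:ℂ)) * s) * (v η : ℂ)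
          = Complex.exp (-(r:ℂ) * s) * Gc η := by
        intro η
        rw [hGc_def]
        rw [← mul_assoc, ← Complex.exp_add]
        congr 2
        ring
      simp_rw [this]
      rw [intervalIntegral.integral_const_mul, supp_interval_integral hτ₁ hGc0, hIG_def]
    simp_rw [h1]
    have h2 : ∀ r : ℝ, Complex.exp (-(r:ℂ) * s) * IG * (u r : ℂ) = IG * Fc r := by
      intro r; rw [hFc_def]; ring
    simp_rw [h2]
    rw [intervalIntegral.integral_const_mul, supp_interval_integral hτ₀.le hFc0]
  -- the convolution weight
  set W : ℝ → ℝ := fun ν => ∫ η, v η * u (ν - η) with hW_def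
  set Ψ : ℝ → ℂ := fun ν => ((W ν : ℝ) : ℂ) * Complex.exp (-(ν:ℂ) * s) with hΨ_def
  -- product integrability
  have hH : Integrable (fun p : ℝ × ℝ => Gc p.2 * Fc (p.1 - p.2)) (volume.prod volume) := by
    have := hGc.convolution_integrand (ContinuousLinearMap.mul ℝ ℂ) hFc
    simpa using this
  -- inner integral identity
  have hinner : ∀ ν : ℝ, (∫ η, Gc η * Fc (ν - η)) = Ψ ν := by
    intro ν
    have h1 : ∀ η : ℝ, Gc η * Fc (ν - η)
        = Complex.exp (-(ν:ℂ) * s) * ((v η * u (ν - η) : ℝ) : ℂ) := by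
      intro η
      rw [hGc_def, hFc_def]
      push_cast
      rw [show Complex.exp (-(η:ℂ) * s) * (v η : ℂ) * (Complex.exp (-((ν:ℂ) - (η:ℂ)) * s) * (u (ν - η) : ℂ))
          = (Complex.exp (-(η:ℂ) * s) * Complex.exp (-((ν:ℂ) - (η:ℂ)) * s)) * ((v η : ℂ) * (u (ν - η) : ℂ)) from by ring]
      have := hexp ν η
      push_cast at this
      rw [this]
    simp_rw [h1]
    rw [integral_const_mul,
      show (∫ a, ((v a * u (ν - a) : ℝ) : ℂ)) = ((∫ a, v a * u (ν - a) : ℝ) : ℂ) from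
        integral_ofReal, hΨ_def, hW_def]
    ring
  have hΨint : Integrable Ψ volume := by
    have h := hH.integral_prod_left
    have : (fun ν => ∫ η, Gc η * Fc (ν - η)) = Ψ := funext hinner
    rwa [this] at h
  -- whole-line integral of Ψ = IG * IF
  have hΨval : (∫ ν, Ψ ν) = IG * IF := by
    rw [← funext hinner]
    rw [integral_integral_swap hH]
    have : ∀ η : ℝ, (∫ ν, Gc η * Fc (ν - η)) = Gc η * IF := by
      intro η
      rw [integral_const_mul, hIF_def]
      congr 1
      exact integral_sub_right_eq_self Fc η
    simp_rw [this]
    rw [integral_mul_const, hIG_def]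
  -- Ψ vanishes off [0, τ₁ + τ₀]
  have hΨ0 : ∀ ν, ν ∉ Set.Icc 0 (τ₁ + τ₀) → Ψ ν = 0 := by
    intro ν hν
    rw [Set.mem_Icc, not_and_or, not_le, not_le] at hν
    have hW0 : W ν = 0 := by
      rw [hW_def]
      have : ∀ η : ℝ, v η * u (ν - η) = 0 := by
        intro η
        rcases hν with hν | hν
        · by_cases hη : η < 0
          · rw [hv0 η (by simp [Set.mem_Icc]; intro h; linarith), zero_mul]
          · rw [hu0 (ν - η) (by simp [Set.mem_Icc]; intro h; linarith), mul_zero]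
        · by_cases hη : η > τ₁
          · rw [hv0 η (by simp [Set.mem_Icc]; intro h; linarith), zero_mul]
          · rw [hu0 (ν - η) (by simp [Set.mem_Icc]; intro h; linarith), mul_zero]
      simp_rw [this]
      exact integral_zero ℝ ℝ
    simp [hΨ_def, hW0]
  -- piece congruences
  have hP1 : (∫ ν in (0:ℝ)..τ₀,
      ((∫ η in (0:ℝ)..ν, v η * u (ν - η) : ℝ) : ℂ) * Complex.exp (-(ν:ℂ) * s))
      = ∫ ν in (0:ℝ)..τ₀, Ψ ν := by
    refine intervalIntegral.integral_congr fun ν hν => ?_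
    rw [Set.uIcc_of_le hτ₀.le, Set.mem_Icc] at hν
    rw [hΨ_def]
    congr 2
    rw [hW_def]
    refine supp_interval_integral hν.1 fun η hη => ?_
    rw [Set.mem_Icc, not_and_or, not_le, not_le] at hη
    rcases hη with hη | hη
    · rw [hv0 η (by simp [Set.mem_Icc]; intro h; linarith), zero_mul]
    · rw [hu0 (ν - η) (by simp [Set.mem_Icc]; intro h; linarith), mul_zero]
  have hP2 : (∫ ν in τ₀..τ₁,
      ((∫ η in (ν - τ₀)..ν, v η * u (ν - η) : ℝ) : ℂ) * Complex.exp (-(ν:ℂ) * s))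
      = ∫ ν in τ₀..τ₁, Ψ ν := by
    refine intervalIntegral.integral_congr fun ν hν => ?_
    rw [Set.uIcc_of_le hττ, Set.mem_Icc] at hν
    rw [hΨ_def]
    congr 2
    rw [hW_def]
    refine supp_interval_integral (by linarith) fun η hη => ?_
    rw [Set.mem_Icc, not_and_or, not_le, not_le] at hη
    rcases hη with hη | hη
    · rw [hu0 (ν - η) (by simp [Set.mem_Icc]; intro h; linarith), mul_zero]
    · rw [hu0 (ν - η) (by simp [Set.mem_Icc]; intro h; linarith), mul_zero]
  have hP3 : (∫ ν in τ₁..(τ₁ + τ₀),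
      ((∫ η in (ν - τ₀)..τ₁, v η * u (ν - η) : ℝ) : ℂ) * Complex.exp (-(ν:ℂ) * s))
      = ∫ ν in τ₁..(τ₁ + τ₀), Ψ ν := by
    refine intervalIntegral.integral_congr fun ν hν => ?_
    rw [Set.uIcc_of_le (by linarith), Set.mem_Icc] at hν
    rw [hΨ_def]
    congr 2
    rw [hW_def]
    refine supp_interval_integral (by linarith) fun η hη => ?_
    rw [Set.mem_Icc, not_and_or, not_le, not_le] at hη
    rcases hη with hη | hη
    · rw [hu0 (ν - η) (by simp [Set.mem_Icc]; intro h; linarith), mul_zero]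
    · rw [hv0 η (by simp [Set.mem_Icc]; intro h; linarith), zero_mul]
  rw [hLHS, hP1, hP2, hP3]
  rw [intervalIntegral.integral_add_adjacent_intervals
      (hΨint.intervalIntegrable) (hΨint.intervalIntegrable),
    intervalIntegral.integral_add_adjacent_intervals
      (hΨint.intervalIntegrable) (hΨint.intervalIntegrable),
    supp_interval_integral (by linarith) hΨ0, hΨval]
end
end

section
/- Let a ∈ ℝ, let M, N : [0,1] → ℝ be continuously differentiable, and let f, g : [0,1] → ℝ be continuously differentiable. Then for every s ∈ ℂ, (1 − a·e^{−s} − ∫₀¹ N(ν)e^{−νs}dν)·(1 − ∫₀¹ g(ν)e^{−νs}dν) − (∫₀¹ M(ν)e^{−νs}dν)·(f(0) − f(1)e^{−s} + ∫₀¹ f'(ν)e^{−νs}dν) = 1 − a·e^{−s} − ∫₀¹ e^{−νs}I₁(ν)dν − ∫₁² e^{−νs}I₃(ν)dν. -/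
open MeasureTheory Set

noncomputable section

/-- `I₁(ν)` for the degenerate case `b = 0`, `τ₀ = τ₁ = 1`, `ν ∈ [0,1]`. -/
def J1 (M N f g : ℝ → ℝ) (ν : ℝ) : ℝ :=
  g ν + M 0 * f ν + N ν + (∫ η in (0:ℝ)..ν, f η * deriv M (ν - η))
    - ∫ η in (0:ℝ)..ν, g η * N (ν - η)

/-- `I₃(ν)` for the degenerate case `b = 0`, `τ₀ = τ₁ = 1`, `ν ∈ [1,2]`. -/
def J3 (a : ℝ) (M N f g : ℝ → ℝ) (ν : ℝ) : ℝ :=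
  -(M 1) * f (ν - 1) + (∫ η in (ν - 1)..(1:ℝ), f η * deriv M (ν - η))
    - a * g (ν - 1) - ∫ η in (ν - 1)..(1:ℝ), g η * N (ν - η)

namespace Stmt8Aux

def ee (s : ℂ) (ν : ℝ) : ℂ := Complex.exp (-(ν:ℂ) * s)

lemma ee_apply (s : ℂ) (ν : ℝ) : Complex.exp (-(ν:ℂ) * s) = ee s ν := rfl

lemma ee_add (s : ℂ) {x y z : ℝ} (h : x + y = z) : ee s x * ee s y = ee s z := by
  rw [ee, ee, ee, ← Complex.exp_add]; congr 1; rw [← h]; push_cast; ring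

lemma ee_cont (s : ℂ) : Continuous (ee s) := by unfold ee; fun_prop

lemma ae_ne (c : ℝ) : ∀ᵐ x : ℝ, x ≠ c := by
  have h : (volume : Measure ℝ) {c} = 0 := measure_singleton c
  filter_upwards [measure_eq_zero_iff_ae_notMem.mp h] with x hx
  simpa using hx

lemma shift (s : ℂ) (h : ℝ → ℝ) :
    (∫ ν in (1:ℝ)..2, (h (ν-1):ℂ) * ee s ν)
      = Complex.exp (-s) * ∫ ν in (0:ℝ)..1, (h ν:ℂ) * ee s ν := by
  have h1 : (∫ ν in (1:ℝ)..2, (h (ν-1):ℂ) * ee s ν)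
      = ∫ x in (0:ℝ)..1, (h ((x+1)-1):ℂ) * ee s (x+1) := by
    rw [intervalIntegral.integral_comp_add_right (fun ν => (h (ν-1):ℂ) * ee s ν) 1]
    norm_num
  rw [h1, ← intervalIntegral.integral_const_mul]
  apply intervalIntegral.integral_congr
  intro x _
  simp only [add_sub_cancel_right]
  have hx : ee s (x+1) = Complex.exp (-s) * ee s x := by
    rw [ee, ee, ← Complex.exp_add]; congr 1; push_cast; ring
  rw [hx]; ring

lemma master (s : ℂ) (u v : ℝ → ℝ) (hu : ContinuousOn u (Icc 0 1))
    (hv : ContinuousOn v (Icc 0 1)) :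
    IntervalIntegrable (fun ν => ee s ν * (((∫ η in (0:ℝ)..ν, u η * v (ν - η)) : ℝ) : ℂ)) volume 0 1 ∧
    IntervalIntegrable (fun ν => ee s ν * (((∫ η in (ν-1:ℝ)..1, u η * v (ν - η)) : ℝ) : ℂ)) volume 1 2 ∧
    (∫ ν in (0:ℝ)..1, (u ν : ℂ) * ee s ν) * (∫ ν in (0:ℝ)..1, (v ν : ℂ) * ee s ν)
      = (∫ ν in (0:ℝ)..1, ee s ν * (((∫ η in (0:ℝ)..ν, u η * v (ν - η)) : ℝ) : ℂ))
        + ∫ ν in (1:ℝ)..2, ee s ν * (((∫ η in (ν-1:ℝ)..1, u η * v (ν - η)) : ℝ) : ℂ) := by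
  set U : ℝ → ℂ := (Ioc (0:ℝ) 1).indicator (fun ν => (u ν : ℂ) * ee s ν) with hUdef
  set V : ℝ → ℂ := (Ioc (0:ℝ) 1).indicator (fun ν => (v ν : ℂ) * ee s ν) with hVdef
  have hcontU : ContinuousOn (fun ν => (u ν : ℂ) * ee s ν) (Icc 0 1) :=
    (Complex.continuous_ofReal.comp_continuousOn hu).mul (ee_cont s).continuousOn
  have hcontV : ContinuousOn (fun ν => (v ν : ℂ) * ee s ν) (Icc 0 1) :=
    (Complex.continuous_ofReal.comp_continuousOn hv).mul (ee_cont s).continuousOn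
  have hUi : Integrable U :=
    ((hcontU.integrableOn_compact isCompact_Icc).mono_set Ioc_subset_Icc_self).integrable_indicator
      measurableSet_Ioc
  have hVi : Integrable V :=
    ((hcontV.integrableOn_compact isCompact_Icc).mono_set Ioc_subset_Icc_self).integrable_indicator
      measurableSet_Ioc
  set L : ℂ →L[ℂ] ℂ →L[ℂ] ℂ := ContinuousLinearMap.mul ℂ ℂ with hL
  set W : ℝ → ℂ := MeasureTheory.convolution U V L volume with hW
  have hWint : Integrable W := by
    have h := hUi.convolution_integrand L hVi
    have h2 := h.integral_prod_left
    exact h2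
  have hid1 : ∀ ν ∈ Ioc (0:ℝ) 1,
      W ν = ee s ν * (((∫ η in (0:ℝ)..ν, u η * v (ν - η)) : ℝ) : ℂ) := by
    intro ν hν
    have hkey : (fun η => U η * V (ν - η))
        = (Ioo (0:ℝ) ν).indicator (fun η => ee s ν * ((u η * v (ν - η) : ℝ) : ℂ)) := by
      funext η
      by_cases hη : η ∈ Ioo (0:ℝ) ν
      · have h1 : η ∈ Ioc (0:ℝ) 1 := ⟨hη.1, hη.2.le.trans hν.2⟩
        have h2 : ν - η ∈ Ioc (0:ℝ) 1 := ⟨by simp [sub_pos, hη.2], by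
          have := hη.1; have := hν.2; linarith⟩
        rw [indicator_of_mem hη, hUdef, hVdef, indicator_of_mem h1, indicator_of_mem h2]
        push_cast
        have hm := ee_add s (show η + (ν - η) = ν by ring)
        linear_combination (u η : ℂ) * (v (ν - η) : ℂ) * hm
      · rw [indicator_of_notMem hη]
        rw [mem_Ioo, not_and_or] at hη
        rcases hη with h | h
        · have hz : U η = 0 := indicator_of_notMem (fun hc => h hc.1) _
          rw [hz, zero_mul]
        · have hz : V (ν - η) = 0 :=
            indicator_of_notMem (fun hc => h (by linarith [hc.1] : η < ν)) _
          rw [hz, mul_zero]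
    calc W ν = ∫ η, U η * V (ν - η) := by
          rw [hW, MeasureTheory.convolution_def]
          simp only [hL, ContinuousLinearMap.mul_apply']
      _ = ∫ η, ((Ioo (0:ℝ) ν).indicator (fun η => ee s ν * ((u η * v (ν - η) : ℝ) : ℂ))) η := by
          rw [hkey]
      _ = ∫ η in Ioo (0:ℝ) ν, ee s ν * ((u η * v (ν - η) : ℝ) : ℂ) :=
          integral_indicator measurableSet_Ioo
      _ = ee s ν * ∫ η in Ioo (0:ℝ) ν, ((u η * v (ν - η) : ℝ) : ℂ) :=
          integral_const_mul _ _
      _ = ee s ν * (((∫ η in Ioo (0:ℝ) ν, u η * v (ν - η)) : ℝ) : ℂ) := by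
          congr 1; exact integral_ofReal
      _ = ee s ν * (((∫ η in (0:ℝ)..ν, u η * v (ν - η)) : ℝ) : ℂ) := by
          rw [intervalIntegral.integral_of_le hν.1.le, integral_Ioc_eq_integral_Ioo]
  have hid2 : ∀ ν ∈ Ioc (1:ℝ) 2,
      W ν = ee s ν * (((∫ η in (ν-1:ℝ)..1, u η * v (ν - η)) : ℝ) : ℂ) := by
    intro ν hν
    have hkey : (fun η => U η * V (ν - η))
        = (Icc (ν-1) 1).indicator (fun η => ee s ν * ((u η * v (ν - η) : ℝ) : ℂ)) := by
      funext η
      by_cases hη : η ∈ Icc (ν-1) 1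
      · have h1 : η ∈ Ioc (0:ℝ) 1 := ⟨by have := hη.1; have := hν.1; linarith, hη.2⟩
        have h2 : ν - η ∈ Ioc (0:ℝ) 1 := ⟨by have := hη.2; have := hν.1; linarith,
          by have := hη.1; linarith⟩
        rw [indicator_of_mem hη, hUdef, hVdef, indicator_of_mem h1, indicator_of_mem h2]
        push_cast
        have hm := ee_add s (show η + (ν - η) = ν by ring)
        linear_combination (u η : ℂ) * (v (ν - η) : ℂ) * hm
      · rw [indicator_of_notMem hη]
        rw [mem_Icc, not_and_or] at hη
        rcases hη with h | h
        · have hz : V (ν - η) = 0 :=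
            indicator_of_notMem (fun hc => h (by linarith [hc.2] : ν - 1 ≤ η)) _
          rw [hz, mul_zero]
        · have hz : U η = 0 := indicator_of_notMem (fun hc => h hc.2) _
          rw [hz, zero_mul]
    calc W ν = ∫ η, U η * V (ν - η) := by
          rw [hW, MeasureTheory.convolution_def]
          simp only [hL, ContinuousLinearMap.mul_apply']
      _ = ∫ η, ((Icc (ν-1) 1).indicator (fun η => ee s ν * ((u η * v (ν - η) : ℝ) : ℂ))) η := by
          rw [hkey]
      _ = ∫ η in Icc (ν-1) 1, ee s ν * ((u η * v (ν - η) : ℝ) : ℂ) :=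
          integral_indicator measurableSet_Icc
      _ = ee s ν * ∫ η in Icc (ν-1) 1, ((u η * v (ν - η) : ℝ) : ℂ) :=
          integral_const_mul _ _
      _ = ee s ν * (((∫ η in Icc (ν-1) 1, u η * v (ν - η)) : ℝ) : ℂ) := by
          congr 1; exact integral_ofReal
      _ = ee s ν * (((∫ η in (ν-1:ℝ)..1, u η * v (ν - η)) : ℝ) : ℂ) := by
          rw [intervalIntegral.integral_of_le (by have := hν.2; linarith),
            integral_Icc_eq_integral_Ioc]
  have hW0 : ∀ ν ∉ Ioc (0:ℝ) 2, W ν = 0 := by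
    intro ν hν
    rw [mem_Ioc, not_and_or] at hν
    have hzero : (fun η => U η * V (ν - η)) = fun _ => (0:ℂ) := by
      funext η
      by_cases hη : η ∈ Ioc (0:ℝ) 1
      · rcases hν with h | h
        · push_neg at h
          have hz : V (ν - η) = 0 := indicator_of_notMem (fun hc => by
            have := hc.1; have := hη.1; linarith) _
          rw [hz, mul_zero]
        · push_neg at h
          have hz : V (ν - η) = 0 := indicator_of_notMem (fun hc => by
            have := hc.2; have := hη.2; linarith) _
          rw [hz, mul_zero]
      · have hz : U η = 0 := indicator_of_notMem hη _
        rw [hz, zero_mul]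
    rw [hW, MeasureTheory.convolution_def]
    simp only [hL, ContinuousLinearMap.mul_apply']
    rw [hzero]
    simp
  have hint1 : IntervalIntegrable
      (fun ν => ee s ν * (((∫ η in (0:ℝ)..ν, u η * v (ν - η)) : ℝ) : ℂ)) volume 0 1 := by
    rw [intervalIntegrable_iff_integrableOn_Ioc_of_le zero_le_one]
    exact (hWint.integrableOn).congr_fun (fun ν hν => hid1 ν hν) measurableSet_Ioc
  have hint2 : IntervalIntegrable
      (fun ν => ee s ν * (((∫ η in (ν-1:ℝ)..1, u η * v (ν - η)) : ℝ) : ℂ)) volume 1 2 := by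
    rw [intervalIntegrable_iff_integrableOn_Ioc_of_le one_le_two]
    exact (hWint.integrableOn).congr_fun (fun ν hν => hid2 ν hν) measurableSet_Ioc
  refine ⟨hint1, hint2, ?_⟩
  have hconv := integral_convolution L hUi hVi
  simp only [hL, ContinuousLinearMap.mul_apply'] at hconv
  have hLu : (∫ ν in (0:ℝ)..1, (u ν : ℂ) * ee s ν) = ∫ ν, U ν := by
    rw [intervalIntegral.integral_of_le zero_le_one, hUdef, ← integral_indicator measurableSet_Ioc]
  have hLv : (∫ ν in (0:ℝ)..1, (v ν : ℂ) * ee s ν) = ∫ ν, V ν := by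
    rw [intervalIntegral.integral_of_le zero_le_one, hVdef, ← integral_indicator measurableSet_Ioc]
  have hWeq : W = (Ioc (0:ℝ) 2).indicator W := by
    funext x
    by_cases hx : x ∈ Ioc (0:ℝ) 2
    · rw [indicator_of_mem hx]
    · rw [indicator_of_notMem hx, hW0 x hx]
  have htot : (∫ x, W x) = (∫ x in Ioc (0:ℝ) 1, W x) + ∫ x in Ioc (1:ℝ) 2, W x := by
    conv_lhs => rw [hWeq]
    rw [integral_indicator measurableSet_Ioc,
      ← Ioc_union_Ioc_eq_Ioc (zero_le_one) (one_le_two : (1:ℝ) ≤ 2)]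
    exact setIntegral_union (Ioc_disjoint_Ioc_of_le le_rfl) measurableSet_Ioc
      hWint.integrableOn hWint.integrableOn
  rw [hLu, hLv, ← hconv]
  change (∫ x, W x) = _
  rw [htot]
  congr 1
  · rw [intervalIntegral.integral_of_le zero_le_one]
    exact setIntegral_congr_fun measurableSet_Ioc (fun ν hν => hid1 ν hν)
  · rw [intervalIntegral.integral_of_le one_le_two]
    exact setIntegral_congr_fun measurableSet_Ioc (fun ν hν => hid2 ν hν)

lemma ibp (f M : ℝ → ℝ) (hf : ContDiffOn ℝ 1 f (Icc 0 1)) (hM : ContDiffOn ℝ 1 M (Icc 0 1))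
    (l uu ν : ℝ) (hlu : l ≤ uu) (hsub : Icc l uu ⊆ Icc 0 1)
    (hmap : ∀ η ∈ Icc l uu, ν - η ∈ Icc (0:ℝ) 1)
    (hint : ∀ η ∈ Ioo l uu, η ∈ Ioo (0:ℝ) 1 ∧ ν - η ∈ Ioo (0:ℝ) 1) :
    (∫ η in l..uu, derivWithin f (Icc 0 1) η * M (ν - η))
      = f uu * M (ν - uu) - f l * M (ν - l)
        + ∫ η in l..uu, f η * derivWithin M (Icc 0 1) (ν - η) := by
  have hUD : UniqueDiffOn ℝ (Icc (0:ℝ) 1) := uniqueDiffOn_Icc one_pos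
  have hf'c : ContinuousOn (derivWithin f (Icc 0 1)) (Icc 0 1) :=
    hf.continuousOn_derivWithin hUD le_rfl
  have hM'c : ContinuousOn (derivWithin M (Icc 0 1)) (Icc 0 1) :=
    hM.continuousOn_derivWithin hUD le_rfl
  have hcs : Continuous (fun η : ℝ => ν - η) := by fun_prop
  have hi1 : IntervalIntegrable (fun η => derivWithin f (Icc 0 1) η * M (ν - η)) volume l uu := by
    apply ContinuousOn.intervalIntegrable
    rw [uIcc_of_le hlu]
    exact (hf'c.mono hsub).mul (hM.continuousOn.comp hcs.continuousOn (fun η hη => hmap η hη))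
  have hi2 : IntervalIntegrable (fun η => f η * derivWithin M (Icc 0 1) (ν - η)) volume l uu := by
    apply ContinuousOn.intervalIntegrable
    rw [uIcc_of_le hlu]
    exact (hf.continuousOn.mono hsub).mul
      (hM'c.comp hcs.continuousOn (fun η hη => hmap η hη))
  have hderiv : ∀ η ∈ Ioo l uu, HasDerivAt (fun η => f η * M (ν - η))
      (derivWithin f (Icc 0 1) η * M (ν - η) - f η * derivWithin M (Icc 0 1) (ν - η)) η := by
    intro η hη
    obtain ⟨h1, h2⟩ := hint η hη
    have hmem1 : Icc (0:ℝ) 1 ∈ nhds η := Icc_mem_nhds h1.1 h1.2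
    have hmem2 : Icc (0:ℝ) 1 ∈ nhds (ν - η) := Icc_mem_nhds h2.1 h2.2
    have hfd : HasDerivAt f (derivWithin f (Icc 0 1) η) η := by
      rw [derivWithin_of_mem_nhds hmem1]
      exact ((hf.differentiableOn one_ne_zero η (mem_of_mem_nhds hmem1)).differentiableAt
        hmem1).hasDerivAt
    have hMd : HasDerivAt M (derivWithin M (Icc 0 1) (ν - η)) (ν - η) := by
      rw [derivWithin_of_mem_nhds hmem2]
      exact ((hM.differentiableOn one_ne_zero (ν - η) (mem_of_mem_nhds hmem2)).differentiableAt
        hmem2).hasDerivAt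
    have hcomp : HasDerivAt (fun η => M (ν - η)) (-(derivWithin M (Icc 0 1) (ν - η))) η := by
      have h := hMd.comp η ((hasDerivAt_id η).const_sub ν)
      simpa [Function.comp_def] using h
    have := hfd.mul hcomp
    rw [mul_neg, ← sub_eq_add_neg] at this
    exact this
  have hcontw : ContinuousOn (fun η => f η * M (ν - η)) (Icc l uu) :=
    (hf.continuousOn.mono hsub).mul
      (hM.continuousOn.comp hcs.continuousOn (fun η hη => hmap η hη))
  have key := intervalIntegral.integral_eq_sub_of_hasDerivAt_of_le hlu hcontw hderiv (hi1.sub hi2)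
  rw [intervalIntegral.integral_sub hi1 hi2] at key
  linarith [key]

end Stmt8Aux

open Stmt8Aux

/-- **Characteristic-equation identity (degenerate case b = 0, τ₀ = τ₁ = 1).**
For all `s ∈ ℂ`,
`F₀(s)(1 - ∫₀¹ g e^{-νs}) - (∫₀¹ M e^{-νs})(f(0) - f(1)e^{-s} + ∫₀¹ f' e^{-νs})
  = 1 - a e^{-s} - ∫₀¹ e^{-νs} I₁ - ∫₁² e^{-νs} I₃`. -/
theorem stmt8
    (a : ℝ) (M N f g : ℝ → ℝ)
    (hM : ContDiffOn ℝ 1 M (Set.Icc 0 1)) (hN : ContDiffOn ℝ 1 N (Set.Icc 0 1))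
    (hf : ContDiffOn ℝ 1 f (Set.Icc 0 1)) (hg : ContDiffOn ℝ 1 g (Set.Icc 0 1))
    (s : ℂ) :
    (1 - (a : ℂ) * Complex.exp (-s)
        - ∫ ν in (0:ℝ)..1, (N ν : ℂ) * Complex.exp (-(ν:ℂ) * s))
      * (1 - ∫ ν in (0:ℝ)..1, (g ν : ℂ) * Complex.exp (-(ν:ℂ) * s))
    - (∫ ν in (0:ℝ)..1, (M ν : ℂ) * Complex.exp (-(ν:ℂ) * s))
      * ((f 0 : ℂ) - (f 1 : ℂ) * Complex.exp (-s)
          + ∫ ν in (0:ℝ)..1, ((deriv f ν : ℝ) : ℂ) * Complex.exp (-(ν:ℂ) * s))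
    = 1 - (a : ℂ) * Complex.exp (-s)
      - (∫ ν in (0:ℝ)..1, Complex.exp (-(ν:ℂ) * s) * (J1 M N f g ν : ℂ))
      - ∫ ν in (1:ℝ)..2, Complex.exp (-(ν:ℂ) * s) * (J3 a M N f g ν : ℂ) := by
  have hUD : UniqueDiffOn ℝ (Icc (0:ℝ) 1) := uniqueDiffOn_Icc one_pos
  set f' := derivWithin f (Set.Icc (0:ℝ) 1) with hf'def
  set M' := derivWithin M (Set.Icc (0:ℝ) 1) with hM'def
  have hf'c : ContinuousOn f' (Icc 0 1) := hf.continuousOn_derivWithin hUD le_rfl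
  have hM'c : ContinuousOn M' (Icc 0 1) := hM.continuousOn_derivWithin hUD le_rfl
  simp only [ee_apply]
  have mkInt : ∀ h : ℝ → ℝ, ContinuousOn h (Icc 0 1) →
      IntervalIntegrable (fun ν => (h ν : ℂ) * ee s ν) volume 0 1 := by
    intro h hh
    apply ContinuousOn.intervalIntegrable
    rw [uIcc_of_le zero_le_one]
    exact (Complex.continuous_ofReal.comp_continuousOn hh).mul (ee_cont s).continuousOn
  have hfe := mkInt f hf.continuousOn
  have hge := mkInt g hg.continuousOn
  have hMe := mkInt M hM.continuousOn
  have hNe := mkInt N hN.continuousOn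
  have mkIntSh : ∀ h : ℝ → ℝ, ContinuousOn h (Icc 0 1) →
      IntervalIntegrable (fun ν => (h (ν - 1) : ℂ) * ee s ν) volume 1 2 := by
    intro h hh
    apply ContinuousOn.intervalIntegrable
    rw [uIcc_of_le one_le_two]
    exact (Complex.continuous_ofReal.comp_continuousOn
      (hh.comp ((by fun_prop : Continuous fun ν : ℝ => ν - 1)).continuousOn
        (fun ν hν => Set.mem_Icc.mpr ⟨by linarith [hν.1], by linarith [hν.2]⟩))).mul
      (ee_cont s).continuousOn
  have hfsh := mkIntSh f hf.continuousOn
  have hgsh := mkIntSh g hg.continuousOn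
  have hMsh := mkIntSh M hM.continuousOn
  obtain ⟨hP1i, hP2i, -⟩ := master s f M' hf.continuousOn hM'c
  obtain ⟨hQ1i, hQ2i, hQeq⟩ := master s g N hg.continuousOn hN.continuousOn
  obtain ⟨-, -, hPeq⟩ := master s f' M hf'c hM.continuousOn
  have hderivf : (∫ ν in (0:ℝ)..1, ((deriv f ν : ℝ) : ℂ) * ee s ν)
      = ∫ ν in (0:ℝ)..1, (f' ν : ℂ) * ee s ν := by
    apply intervalIntegral.integral_congr_ae
    filter_upwards [ae_ne 1] with ν hν hmem
    rw [uIoc_of_le (zero_le_one : (0:ℝ) ≤ 1)] at hmem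
    have hn : Icc (0:ℝ) 1 ∈ nhds ν := Icc_mem_nhds hmem.1 (lt_of_le_of_ne hmem.2 hν)
    rw [hf'def, derivWithin_of_mem_nhds hn]
  rw [hderivf]
  have hfM1 : (∫ ν in (0:ℝ)..1, ee s ν * (((∫ η in (0:ℝ)..ν, f' η * M (ν - η)) : ℝ) : ℂ))
      = (M 0 : ℂ) * (∫ ν in (0:ℝ)..1, (f ν : ℂ) * ee s ν)
        - (f 0 : ℂ) * (∫ ν in (0:ℝ)..1, (M ν : ℂ) * ee s ν)
        + ∫ ν in (0:ℝ)..1, ee s ν * (((∫ η in (0:ℝ)..ν, f η * M' (ν - η)) : ℝ) : ℂ) := by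
    have hcg : EqOn (fun ν => ee s ν * (((∫ η in (0:ℝ)..ν, f' η * M (ν - η)) : ℝ) : ℂ))
        (fun ν => (M 0 : ℂ) * ((f ν : ℂ) * ee s ν) - (f 0 : ℂ) * ((M ν : ℂ) * ee s ν)
          + ee s ν * (((∫ η in (0:ℝ)..ν, f η * M' (ν - η)) : ℝ) : ℂ)) (uIcc (0:ℝ) 1) := by
      intro ν hν
      rw [uIcc_of_le zero_le_one, mem_Icc] at hν
      have hibp := ibp f M hf hM 0 ν ν hν.1
        (fun η hη => ⟨hη.1, hη.2.trans hν.2⟩)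
        (fun η hη => ⟨by linarith [hη.2], by linarith [hη.1, hν.2]⟩)
        (fun η hη => ⟨⟨hη.1, lt_of_lt_of_le hη.2 hν.2⟩,
          ⟨by linarith [hη.2], by linarith [hη.1, hν.2]⟩⟩)
      simp only [sub_self, sub_zero] at hibp
      simp only [← hf'def, ← hM'def] at hibp
      simp only [hibp]
      push_cast
      ring
    rw [intervalIntegral.integral_congr hcg,
      intervalIntegral.integral_add ((hfe.const_mul _).sub (hMe.const_mul _)) hP1i,
      intervalIntegral.integral_sub (hfe.const_mul _) (hMe.const_mul _),
      intervalIntegral.integral_const_mul, intervalIntegral.integral_const_mul]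
  have hfM2 : (∫ ν in (1:ℝ)..2, ee s ν * (((∫ η in (ν-1:ℝ)..1, f' η * M (ν - η)) : ℝ) : ℂ))
      = (f 1 : ℂ) * (Complex.exp (-s) * ∫ ν in (0:ℝ)..1, (M ν : ℂ) * ee s ν)
        - (M 1 : ℂ) * (Complex.exp (-s) * ∫ ν in (0:ℝ)..1, (f ν : ℂ) * ee s ν)
        + ∫ ν in (1:ℝ)..2, ee s ν * (((∫ η in (ν-1:ℝ)..1, f η * M' (ν - η)) : ℝ) : ℂ) := by
    have hcg : EqOn (fun ν => ee s ν * (((∫ η in (ν-1:ℝ)..1, f' η * M (ν - η)) : ℝ) : ℂ))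
        (fun ν => (f 1 : ℂ) * ((M (ν - 1) : ℂ) * ee s ν)
          - (M 1 : ℂ) * ((f (ν - 1) : ℂ) * ee s ν)
          + ee s ν * (((∫ η in (ν-1:ℝ)..1, f η * M' (ν - η)) : ℝ) : ℂ)) (uIcc (1:ℝ) 2) := by
      intro ν hν
      rw [uIcc_of_le one_le_two, mem_Icc] at hν
      have hibp := ibp f M hf hM (ν - 1) 1 ν (by linarith [hν.2])
        (fun η hη => ⟨by linarith [hη.1, hν.1], hη.2⟩)
        (fun η hη => ⟨by linarith [hη.2, hν.1], by linarith [hη.1]⟩)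
        (fun η hη => ⟨⟨by linarith [hη.1, hν.1], hη.2⟩,
          ⟨by linarith [hη.2, hν.1], by linarith [hη.1]⟩⟩)
      have hone : ν - (ν - 1) = 1 := by ring
      rw [hone] at hibp
      simp only [← hf'def, ← hM'def] at hibp
      simp only [hibp]
      push_cast
      ring
    rw [intervalIntegral.integral_congr hcg,
      intervalIntegral.integral_add ((hMsh.const_mul _).sub (hfsh.const_mul _)) hP2i,
      intervalIntegral.integral_sub (hMsh.const_mul _) (hfsh.const_mul _),
      intervalIntegral.integral_const_mul, intervalIntegral.integral_const_mul,
      shift s M, shift s f]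
  have hJ1 : (∫ ν in (0:ℝ)..1, ee s ν * (J1 M N f g ν : ℂ))
      = (∫ ν in (0:ℝ)..1, (g ν : ℂ) * ee s ν)
        + (M 0 : ℂ) * (∫ ν in (0:ℝ)..1, (f ν : ℂ) * ee s ν)
        + (∫ ν in (0:ℝ)..1, (N ν : ℂ) * ee s ν)
        + (∫ ν in (0:ℝ)..1, ee s ν * (((∫ η in (0:ℝ)..ν, f η * M' (ν - η)) : ℝ) : ℂ))
        - ∫ ν in (0:ℝ)..1, ee s ν * (((∫ η in (0:ℝ)..ν, g η * N (ν - η)) : ℝ) : ℂ) := by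
    have hcg : ∀ᵐ ν, ν ∈ uIoc (0:ℝ) 1 → ee s ν * (J1 M N f g ν : ℂ)
        = (g ν : ℂ) * ee s ν + (M 0 : ℂ) * ((f ν : ℂ) * ee s ν) + (N ν : ℂ) * ee s ν
          + ee s ν * (((∫ η in (0:ℝ)..ν, f η * M' (ν - η)) : ℝ) : ℂ)
          - ee s ν * (((∫ η in (0:ℝ)..ν, g η * N (ν - η)) : ℝ) : ℂ) := by
      apply Filter.Eventually.of_forall
      intro ν hmem
      rw [uIoc_of_le (zero_le_one : (0:ℝ) ≤ 1)] at hmem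
      have hin : (∫ η in (0:ℝ)..ν, f η * deriv M (ν - η))
          = ∫ η in (0:ℝ)..ν, f η * M' (ν - η) := by
        apply intervalIntegral.integral_congr_ae
        filter_upwards [ae_ne ν] with η hη hmemη
        rw [uIoc_of_le hmem.1.le] at hmemη
        have hlt : η < ν := lt_of_le_of_ne hmemη.2 hη
        have hn : Icc (0:ℝ) 1 ∈ nhds (ν - η) :=
          Icc_mem_nhds (by linarith) (by linarith [hmemη.1, hmem.2])
        rw [hM'def, derivWithin_of_mem_nhds hn]
      simp only [J1]
      rw [hin]
      push_cast
      ring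
    rw [intervalIntegral.integral_congr_ae hcg,
      intervalIntegral.integral_sub (((hge.add (hfe.const_mul _)).add hNe).add hP1i) hQ1i,
      intervalIntegral.integral_add ((hge.add (hfe.const_mul _)).add hNe) hP1i,
      intervalIntegral.integral_add (hge.add (hfe.const_mul _)) hNe,
      intervalIntegral.integral_add hge (hfe.const_mul _),
      intervalIntegral.integral_const_mul]
  have hJ3 : (∫ ν in (1:ℝ)..2, ee s ν * (J3 a M N f g ν : ℂ))
      = -(M 1 : ℂ) * (Complex.exp (-s) * ∫ ν in (0:ℝ)..1, (f ν : ℂ) * ee s ν)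
        + (∫ ν in (1:ℝ)..2, ee s ν * (((∫ η in (ν-1:ℝ)..1, f η * M' (ν - η)) : ℝ) : ℂ))
        - (a : ℂ) * (Complex.exp (-s) * ∫ ν in (0:ℝ)..1, (g ν : ℂ) * ee s ν)
        - ∫ ν in (1:ℝ)..2, ee s ν * (((∫ η in (ν-1:ℝ)..1, g η * N (ν - η)) : ℝ) : ℂ) := by
    have hcg : ∀ᵐ ν, ν ∈ uIoc (1:ℝ) 2 → ee s ν * (J3 a M N f g ν : ℂ)
        = -(M 1 : ℂ) * ((f (ν - 1) : ℂ) * ee s ν)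
          + ee s ν * (((∫ η in (ν-1:ℝ)..1, f η * M' (ν - η)) : ℝ) : ℂ)
          - (a : ℂ) * ((g (ν - 1) : ℂ) * ee s ν)
          - ee s ν * (((∫ η in (ν-1:ℝ)..1, g η * N (ν - η)) : ℝ) : ℂ) := by
      apply Filter.Eventually.of_forall
      intro ν hmem
      rw [uIoc_of_le (one_le_two : (1:ℝ) ≤ 2)] at hmem
      have hin : (∫ η in (ν-1:ℝ)..1, f η * deriv M (ν - η))
          = ∫ η in (ν-1:ℝ)..1, f η * M' (ν - η) := by
        apply intervalIntegral.integral_congr_ae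
        apply Filter.Eventually.of_forall
        intro η hmemη
        rw [uIoc_of_le (by linarith [hmem.2] : ν - 1 ≤ 1)] at hmemη
        have hn : Icc (0:ℝ) 1 ∈ nhds (ν - η) :=
          Icc_mem_nhds (by linarith [hmemη.2, hmem.1]) (by linarith [hmemη.1])
        rw [hM'def, derivWithin_of_mem_nhds hn]
      simp only [J3]
      rw [hin]
      push_cast
      ring
    rw [intervalIntegral.integral_congr_ae hcg,
      intervalIntegral.integral_sub (((hfsh.const_mul _).add hP2i).sub (hgsh.const_mul _)) hQ2i,
      intervalIntegral.integral_sub ((hfsh.const_mul _).add hP2i) (hgsh.const_mul _),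
      intervalIntegral.integral_add (hfsh.const_mul _) hP2i,
      intervalIntegral.integral_const_mul, intervalIntegral.integral_const_mul,
      shift s f, shift s g]
  rw [hfM1, hfM2] at hPeq
  rw [hJ1, hJ3]
  linear_combination hQeq - hPeq
end
end

section
/- Let 0 < τ₀ ≤ τ₁ with τ₁ = (n₀+1)τ₀ − γ, n₀ ∈ ℕ, γ ∈ [0,τ₀), a, b ∈ ℝ, let N : [0,τ₀] → ℝ and M : [0,τ₁] → ℝ be piecewise continuously differentiable (extended by 0 outside their domains), and assume spectral controllability: for every s ∈ ℂ, (F₀(s), F₁(s)) ≠ (0,0), where F₀(s) = 1 − a·exp(−τ₀s) − ∫₀^{τ₀} N(ν)exp(−νs)dν and F₁(s) = b·exp(−τ₁s) + ∫₀^{τ₁} M(ν)exp(−νs)dν. Then for every s ∈ ℂ, ker(s·Id − A_T) ∩ ker(B_T) = {0}, i.e., the only h ∈ D(A_T) (ℂ-valued) with A_T h = s·h and B_T h = 0 is h = 0. -/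
open MeasureTheory Set

noncomputable section

lemma expDeriv (s : ℂ) (x : ℝ) :
    HasDerivAt (fun t : ℝ => Complex.exp (-(t:ℂ) * s)) (-s * Complex.exp (-(x:ℂ) * s)) x := by
  have h1 : HasDerivAt (fun t : ℝ => -(t:ℂ) * s) (-s) x := by
    simpa using (Complex.ofRealCLM.hasDerivAt (x := x)).neg.mul_const s
  simpa [mul_comm] using h1.cexp

lemma pw_aesm_s14 {w : ℝ → ℝ} {T : ℝ} (hw : PwContOn w 0 T)
    (hw0 : ∀ x, x ∉ Set.Icc 0 T → w x = 0) :
    AEStronglyMeasurable w (volume : Measure ℝ) ∧ ∃ C, ∀ x, |w x| ≤ C := by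
  obtain ⟨⟨S, hS⟩, C, hC⟩ := hw
  constructor
  · set S' : Set ℝ := ↑S ∪ {0, T} with hS'
    have hS'c : S'.Countable := (S.countable_toSet).union ((Set.countable_singleton T).insert 0)
    have hcont : ∀ x ∈ S'ᶜ, ContinuousAt w x := by
      intro x hx
      simp only [hS', Set.mem_compl_iff, Set.mem_union, Set.mem_insert_iff,
        Set.mem_singleton_iff, not_or, Finset.mem_coe] at hx
      obtain ⟨hxS, hx0, hxT⟩ := hx
      by_cases hmem : x ∈ Set.Icc 0 T
      · have hxo : x ∈ Set.Ioo 0 T := ⟨lt_of_le_of_ne hmem.1 (Ne.symm hx0), lt_of_le_of_ne hmem.2 hxT⟩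
        have hnb : Set.Icc 0 T \ ↑S ∈ nhds x := by
          have : Set.Ioo 0 T ∩ (↑S : Set ℝ)ᶜ ∈ nhds x :=
            Filter.inter_mem (Ioo_mem_nhds hxo.1 hxo.2)
              ((S.finite_toSet.isClosed.isOpen_compl).mem_nhds (by simpa using hxS))
          exact Filter.mem_of_superset this fun y hy => ⟨Set.Ioo_subset_Icc_self hy.1, hy.2⟩
        exact (hS x ⟨hmem, by simpa using hxS⟩).continuousAt hnb
      · have hop : IsOpen (Set.Icc (0:ℝ) T)ᶜ := isClosed_Icc.isOpen_compl
        have : w =ᶠ[nhds x] fun _ => 0 :=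
          Filter.eventuallyEq_of_mem (hop.mem_nhds hmem) fun y hy => hw0 y hy
        exact continuousAt_const.congr this.symm
    have hres : (volume : Measure ℝ).restrict S'ᶜ = volume := by
      have he : (S'ᶜ : Set ℝ) =ᵐ[(volume : Measure ℝ)] (Set.univ : Set ℝ) := by
        rw [ae_eq_univ]; simpa using hS'c.measure_zero (volume : Measure ℝ)
      rw [Measure.restrict_congr_set he, Measure.restrict_univ]
    have : AEMeasurable w ((volume : Measure ℝ).restrict S'ᶜ) :=
      ContinuousOn.aemeasurable (fun x hx => (hcont x hx).continuousWithinAt)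
        hS'c.measurableSet.compl
    rw [hres] at this
    exact this.aestronglyMeasurable
  · refine ⟨max C 0, fun x => ?_⟩
    by_cases hmem : x ∈ Set.Icc 0 T
    · exact le_max_of_le_left (hC x hmem)
    · simp [hw0 x hmem]

lemma pw_II {w : ℝ → ℝ} (hm : AEStronglyMeasurable w (volume : Measure ℝ))
    {C : ℝ} (hC : ∀ x, |w x| ≤ C) (s : ℂ) (d a b : ℝ) :
    IntervalIntegrable (fun ν => ((w (ν + d) : ℂ)) * Complex.exp (-(ν:ℂ) * s)) volume a b := by
  have h1 : AEStronglyMeasurable (fun ν : ℝ => w (ν + d)) volume :=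
    hm.comp_measurePreserving (measurePreserving_add_right volume d)
  have h2 : AEStronglyMeasurable (fun ν : ℝ => ((w (ν + d) : ℂ))) volume :=
    Complex.continuous_ofReal.comp_aestronglyMeasurable h1
  have hbase : IntervalIntegrable (fun ν : ℝ => ((w (ν + d) : ℂ))) volume a b := by
    rw [intervalIntegrable_iff]
    refine Measure.integrableOn_of_bounded (M := C) ?_ h2 ?_
    · exact measure_Ioc_lt_top.ne
    · exact ae_of_all _ fun x => by simpa using hC (x + d)
  exact hbase.mul_continuousOn
    ((Complex.continuous_exp.comp (by continuity)).continuousOn)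

lemma ftcODE {T : ℝ} (hT : 0 ≤ T) {s : ℂ} {h dh w : ℝ → ℂ}
    (hd : ∀ x ∈ Set.Icc 0 T, HasDerivWithinAt h (dh x) (Set.Icc 0 T) x)
    (hrel : ∀ x ∈ Set.Icc 0 T, dh x = s * h x - w x)
    (hint : IntervalIntegrable (fun ν => w ν * Complex.exp (-(ν:ℂ) * s)) volume 0 T) :
    Complex.exp (-(T:ℂ) * s) * h T - h 0 =
      -∫ ν in (0:ℝ)..T, w ν * Complex.exp (-(ν:ℂ) * s) := by
  set G : ℝ → ℂ := fun ν => Complex.exp (-(ν:ℂ) * s) * h ν with hG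
  have hGd : ∀ x ∈ Set.Icc 0 T, HasDerivWithinAt G
      (-(w x * Complex.exp (-(x:ℂ) * s))) (Set.Icc 0 T) x := by
    intro x hx
    have h2 := ((expDeriv s x).hasDerivWithinAt.mul (hd x hx))
    have hv : -s * Complex.exp (-(x:ℂ)*s) * h x + Complex.exp (-(x:ℂ)*s) * dh x
        = -(w x * Complex.exp (-(x:ℂ)*s)) := by rw [hrel x hx]; ring
    rwa [hv] at h2
  have hcont : ContinuousOn G (Set.Icc 0 T) := fun x hx => (hGd x hx).continuousWithinAt
  have key := intervalIntegral.integral_eq_sub_of_hasDeriv_right_of_le hT hcont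
    (fun x hx => (hGd x ⟨hx.1.le, hx.2.le⟩).mono_of_mem_nhdsWithin
      (Icc_mem_nhdsGT_of_mem ⟨hx.1.le, hx.2⟩)) hint.neg
  rw [intervalIntegral.integral_neg] at key
  have hG0 : G 0 = h 0 := by simp [hG]
  rw [hG0] at key
  exact key.symm

lemma zeroODE {T : ℝ} {s : ℂ} {h dh : ℝ → ℂ}
    (hd : ∀ x ∈ Set.Icc 0 T, HasDerivWithinAt h (dh x) (Set.Icc 0 T) x)
    (hrel : ∀ x ∈ Set.Icc 0 T, dh x = s * h x)
    (h0 : h 0 = 0) : ∀ x ∈ Set.Icc 0 T, h x = 0 := by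
  set G : ℝ → ℂ := fun ν => Complex.exp (-(ν:ℂ) * s) * h ν with hG
  have hGd : ∀ x ∈ Set.Icc 0 T, HasDerivWithinAt G 0 (Set.Icc 0 T) x := by
    intro x hx
    have h2 := ((expDeriv s x).hasDerivWithinAt.mul (hd x hx))
    have hv : -s * Complex.exp (-(x:ℂ)*s) * h x + Complex.exp (-(x:ℂ)*s) * dh x = 0 := by
      rw [hrel x hx]; ring
    rwa [hv] at h2
  have hcont : ContinuousOn G (Set.Icc 0 T) := fun x hx => (hGd x hx).continuousWithinAt
  have key := constant_of_has_deriv_right_zero hcont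
    (fun x hx => (hGd x ⟨hx.1, hx.2.le⟩).mono_of_mem_nhdsWithin (Icc_mem_nhdsGE_of_mem hx))
  intro x hx
  have hx0 : G x = G 0 := key x hx
  have hG0 : G 0 = 0 := by simp [hG, h0]
  rw [hG0] at hx0
  have hne := Complex.exp_ne_zero (-(x:ℂ) * s)
  simpa [hG, hne] using hx0

/-- **Condition 4 of the invertibility lemma.** Under spectral controllability, for every
`s ∈ ℂ` the only `h = (g₀,…,g_{n₀},f) ∈ D(A_T)` with `A_T h = s h` and `B_T h = 0` is
`h = 0`, i.e. `ker(s·Id - A_T) ∩ ker B_T = {0}`. -/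
theorem stmt14
    (τ₀ τ₁ γ a b : ℝ) (n₀ : ℕ) (N M : ℝ → ℝ) (s : ℂ)
    (hτ₀ : 0 < τ₀) (hττ : τ₀ ≤ τ₁)
    (hτ₁ : τ₁ = (n₀ + 1 : ℝ) * τ₀ - γ) (hγ : 0 ≤ γ ∧ γ < τ₀)
    (hN : PwC1On N 0 τ₀) (hM : PwC1On M 0 τ₁)
    (hN0 : ∀ x, x ∉ Set.Icc 0 τ₀ → N x = 0)
    (hM0 : ∀ x, x ∉ Set.Icc 0 τ₁ → M x = 0)
    (hspec : ∀ z : ℂ, ¬(F0 a τ₀ N z = 0 ∧ F1 b τ₁ M z = 0))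
    (g : ℕ → ℝ → ℂ) (f : ℝ → ℂ) (dg : ℕ → ℝ → ℂ) (df : ℝ → ℂ)
    (hgderiv : ∀ k ≤ n₀, ∀ x ∈ Set.Icc 0 τ₀,
      HasDerivWithinAt (g k) (dg k x) (Set.Icc 0 τ₀) x)
    (hfderiv : ∀ x ∈ Set.Icc 0 τ₀, HasDerivWithinAt f (df x) (Set.Icc 0 τ₀) x)
    (hbc1 : f τ₀ = (a : ℂ) * f 0)
    (hbc2 : g n₀ τ₀ = (b : ℂ) * f 0)
    (hbc3 : ∀ k < n₀, g k τ₀ = g (k + 1) 0)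
    (heigg : ∀ k ≤ n₀, ∀ ν ∈ Set.Icc 0 τ₀,
      dg k ν + f 0 * (M (ν + (k : ℝ) * τ₀ - γ) : ℂ) = s * g k ν)
    (heigf : ∀ ν ∈ Set.Icc 0 τ₀, df ν + f 0 * (N ν : ℂ) = s * f ν)
    (hB : g 0 0 = 0) :
    (∀ k ≤ n₀, ∀ ν ∈ Set.Icc 0 τ₀, g k ν = 0) ∧ (∀ ν ∈ Set.Icc 0 τ₀, f ν = 0) := by
  by_cases hc : f 0 = 0
  · -- trivial case: f 0 = 0
    have hf0 : ∀ ν ∈ Set.Icc 0 τ₀, f ν = 0 := by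
      refine zeroODE (s := s) hfderiv (fun x hx => ?_) hc
      have h := heigf x hx
      rw [hc, zero_mul, add_zero] at h
      exact h
    have hg0 : ∀ k, k ≤ n₀ → (g k 0 = 0 ∧ ∀ ν ∈ Set.Icc 0 τ₀, g k ν = 0) := by
      intro k
      induction k with
      | zero =>
        intro _
        have hz : ∀ ν ∈ Set.Icc 0 τ₀, g 0 ν = 0 := by
          refine zeroODE (s := s) (hgderiv 0 (Nat.zero_le _)) (fun x hx => ?_) hB
          have h := heigg 0 (Nat.zero_le _) x hx
          rw [hc, zero_mul, add_zero] at h; exact h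
        exact ⟨hB, hz⟩
      | succ k ih =>
        intro hk
        have hklt : k < n₀ := Nat.lt_of_succ_le hk
        have h0 : g (k + 1) 0 = 0 := by
          rw [← hbc3 k hklt]
          exact (ih hklt.le).2 τ₀ ⟨hτ₀.le, le_refl _⟩
        have hz : ∀ ν ∈ Set.Icc 0 τ₀, g (k + 1) ν = 0 := by
          refine zeroODE (s := s) (hgderiv (k + 1) hk) (fun x hx => ?_) h0
          have h := heigg (k + 1) hk x hx
          rw [hc, zero_mul, add_zero] at h; exact h
        exact ⟨h0, hz⟩
    exact ⟨fun k hk => (hg0 k hk).2, hf0⟩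
  · -- nontrivial case: derive F0 s = 0 and F1 s = 0, contradicting hspec
    obtain ⟨hNm, CN, hNC⟩ := pw_aesm_s14 hN.1 hN0
    obtain ⟨hMm, CM, hMC⟩ := pw_aesm_s14 hM.1 hM0
    -- F0 s = 0
    have hNint : IntervalIntegrable (fun ν => (N ν : ℂ) * Complex.exp (-(ν:ℂ) * s))
        volume 0 τ₀ := by simpa using pw_II hNm hNC s 0 0 τ₀
    have hfFTC := ftcODE hτ₀.le hfderiv
      (w := fun ν => f 0 * (N ν : ℂ))
      (fun x hx => by linear_combination heigf x hx)
      (by simpa [mul_assoc] using hNint.const_mul (f 0))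
    have hrw : (fun ν : ℝ => (f 0 * (N ν : ℂ)) * Complex.exp (-(ν:ℂ) * s))
        = fun ν : ℝ => f 0 * ((N ν : ℂ) * Complex.exp (-(ν:ℂ) * s)) := by
      funext ν; ring
    rw [hrw, intervalIntegral.integral_const_mul, hbc1] at hfFTC
    have hF0 : F0 a τ₀ N s = 0 := by
      have hmul : f 0 * F0 a τ₀ N s = 0 := by
        rw [F0]; linear_combination -hfFTC
      exact (mul_eq_zero.mp hmul).resolve_left hc
    -- F1 s = 0
    set FM : ℝ → ℂ := fun ν => (M ν : ℂ) * Complex.exp (-(ν:ℂ) * s) with hFM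
    have hMint : ∀ u v : ℝ, IntervalIntegrable FM volume u v := fun u v => by
      simpa [hFM] using pw_II hMm hMC s 0 u v
    set J : ℕ → ℂ := fun k =>
      ∫ η in (0:ℝ)..τ₀, (M (η + ((k : ℝ) * τ₀ - γ)) : ℂ) * Complex.exp (-(η:ℂ) * s) with hJ
    have hFk : ∀ k ≤ n₀, Complex.exp (-(τ₀:ℂ) * s) * g k τ₀ = g k 0 - f 0 * J k := by
      intro k hk
      have hMkint := pw_II hMm hMC s ((k : ℝ) * τ₀ - γ) 0 τ₀
      have hftc := ftcODE (s := s) hτ₀.le (hgderiv k hk)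
        (w := fun ν => f 0 * (M (ν + ((k : ℝ) * τ₀ - γ)) : ℂ))
        (fun x hx => by
          show dg k x = s * g k x - f 0 * (M (x + ((k : ℝ) * τ₀ - γ)) : ℂ)
          rw [← add_sub_assoc]
          linear_combination heigg k hk x hx)
        (by simpa [mul_assoc] using hMkint.const_mul (f 0))
      have hrw2 : (fun ν : ℝ => (f 0 * (M (ν + ((k : ℝ) * τ₀ - γ)) : ℂ))
            * Complex.exp (-(ν:ℂ) * s))
          = fun ν : ℝ => f 0 * ((M (ν + ((k : ℝ) * τ₀ - γ)) : ℂ)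
            * Complex.exp (-(ν:ℂ) * s)) := by funext ν; ring
      rw [hrw2, intervalIntegral.integral_const_mul] at hftc
      rw [hJ]
      linear_combination hftc
    set Ek : ℕ → ℂ := fun k => Complex.exp (-(((k : ℝ) * τ₀ : ℝ) : ℂ) * s) with hEk
    have hEkS : ∀ k, Ek (k + 1) = Ek k * Complex.exp (-(τ₀:ℂ) * s) := by
      intro k
      rw [hEk]
      simp only
      rw [← Complex.exp_add]
      congr 1
      push_cast
      ring
    have key : ∀ k, k ≤ n₀ → Ek k * g k 0 = -(f 0) * ∑ j ∈ Finset.range k, Ek j * J j := by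
      intro k
      induction k with
      | zero => intro _; simp [hB]
      | succ k ih =>
        intro hk
        have hklt : k < n₀ := Nat.lt_of_succ_le hk
        calc Ek (k + 1) * g (k + 1) 0 = Ek (k + 1) * g k τ₀ := by rw [← hbc3 k hklt]
          _ = Ek k * (Complex.exp (-(τ₀:ℂ) * s) * g k τ₀) := by rw [hEkS k]; ring
          _ = Ek k * (g k 0 - f 0 * J k) := by rw [hFk k hklt.le]
          _ = Ek k * g k 0 - f 0 * (Ek k * J k) := by ring
          _ = -(f 0) * ∑ j ∈ Finset.range (k + 1), Ek j * J j := by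
              rw [ih hklt.le, Finset.sum_range_succ]; ring
    have final : Ek (n₀ + 1) * ((b : ℂ) * f 0)
        = -(f 0) * ∑ j ∈ Finset.range (n₀ + 1), Ek j * J j := by
      calc Ek (n₀ + 1) * ((b : ℂ) * f 0) = Ek (n₀ + 1) * g n₀ τ₀ := by rw [← hbc2]
        _ = Ek n₀ * (Complex.exp (-(τ₀:ℂ) * s) * g n₀ τ₀) := by rw [hEkS n₀]; ring
        _ = Ek n₀ * (g n₀ 0 - f 0 * J n₀) := by rw [hFk n₀ le_rfl]
        _ = Ek n₀ * g n₀ 0 - f 0 * (Ek n₀ * J n₀) := by ring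
        _ = -(f 0) * ∑ j ∈ Finset.range (n₀ + 1), Ek j * J j := by
            rw [key n₀ le_rfl, Finset.sum_range_succ]; ring
    set aa : ℕ → ℝ := fun j => (j : ℝ) * τ₀ - γ with haa
    have hterm : ∀ j : ℕ, Ek j * J j
        = Complex.exp (-(γ:ℂ) * s) * ∫ ν in (aa j)..(aa (j + 1)), FM ν := by
      intro j
      have h1 : ∀ η : ℝ, Ek j * ((M (η + ((j : ℝ) * τ₀ - γ)) : ℂ) * Complex.exp (-(η:ℂ) * s))
          = Complex.exp (-(γ:ℂ) * s) * FM (η + ((j : ℝ) * τ₀ - γ)) := by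
        intro η
        have he : Complex.exp (-((((j : ℝ) * τ₀ : ℝ)) : ℂ) * s) * Complex.exp (-(η:ℂ) * s)
            = Complex.exp (-(γ:ℂ) * s)
              * Complex.exp (-((η + ((j : ℝ) * τ₀ - γ) : ℝ) : ℂ) * s) := by
          rw [← Complex.exp_add, ← Complex.exp_add]
          congr 1
          push_cast
          ring
        rw [hEk, hFM]
        simp only
        linear_combination ((M (η + ((j : ℝ) * τ₀ - γ)) : ℂ)) * he
      have h2 : Ek j * J j = ∫ η in (0:ℝ)..τ₀,
          Complex.exp (-(γ:ℂ) * s) * FM (η + ((j : ℝ) * τ₀ - γ)) := by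
        rw [hJ]
        simp only
        rw [← intervalIntegral.integral_const_mul]
        exact intervalIntegral.integral_congr fun η _ => h1 η
      rw [h2, intervalIntegral.integral_const_mul]
      congr 1
      rw [intervalIntegral.integral_comp_add_right FM ((j : ℝ) * τ₀ - γ)]
      congr 1
      · rw [haa]; simp
      · rw [haa]; push_cast; ring
    have hsum : ∑ j ∈ Finset.range (n₀ + 1), Ek j * J j
        = Complex.exp (-(γ:ℂ) * s) * ∫ ν in (aa 0)..(aa (n₀ + 1)), FM ν := by
      rw [Finset.sum_congr rfl fun j _ => hterm j, ← Finset.mul_sum]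
      congr 1
      exact intervalIntegral.sum_integral_adjacent_intervals fun k _ => hMint _ _
    have ha0 : aa 0 = -γ := by rw [haa]; simp
    have haend : aa (n₀ + 1) = τ₁ := by rw [haa, hτ₁]; push_cast; ring
    have hzero : ∫ ν in (-γ)..(0:ℝ), FM ν = 0 := by
      rw [intervalIntegral.integral_of_le (by linarith [hγ.1] : -γ ≤ (0:ℝ))]
      refine integral_eq_zero_of_ae ?_
      rw [Filter.EventuallyEq, ae_restrict_iff' measurableSet_Ioc, ae_iff]
      refine measure_mono_null (t := {(0:ℝ)}) (fun x hx => ?_) Real.volume_singleton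
      simp only [Set.mem_setOf_eq, not_forall, Pi.zero_apply] at hx
      obtain ⟨hmem, hne⟩ := hx
      simp only [Set.mem_singleton_iff]
      by_contra hx0
      have hxlt : x < 0 := lt_of_le_of_ne hmem.2 hx0
      have hMx : M x = 0 := hM0 x fun hmem' => absurd hmem'.1 (not_le.mpr hxlt)
      exact hne (by simp [hFM, hMx])
    have hsplit : (∫ ν in (-γ)..τ₁, FM ν) = ∫ ν in (0:ℝ)..τ₁, FM ν := by
      rw [← intervalIntegral.integral_add_adjacent_intervals (hMint (-γ) 0) (hMint 0 τ₁), hzero,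
        zero_add]
    have hEfin : Ek (n₀ + 1) = Complex.exp (-(τ₁:ℂ) * s) * Complex.exp (-(γ:ℂ) * s) := by
      rw [hEk]
      simp only
      rw [← Complex.exp_add]
      congr 1
      push_cast
      rw [hτ₁]
      push_cast
      ring
    rw [hsum, ha0, haend, hsplit, hEfin] at final
    have hkey2 : Complex.exp (-(γ:ℂ) * s)
        * (f 0 * ((b : ℂ) * Complex.exp (-(τ₁:ℂ) * s) + ∫ ν in (0:ℝ)..τ₁, FM ν)) = 0 := by
      linear_combination final
    have hF1 : F1 b τ₁ M s = 0 := by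
      have h3 := (mul_eq_zero.mp hkey2).resolve_left (Complex.exp_ne_zero _)
      have h4 := (mul_eq_zero.mp h3).resolve_left hc
      rw [F1]
      exact h4
    exact absurd ⟨hF0, hF1⟩ (hspec s)
end
end

section
/- Let τ₀ > 0, a ∈ (−1,1), and let N : [0,τ₀] → ℝ be piecewise continuous. Then the set {s ∈ ℂ : Re(s) ≥ 0 and F₀(s) = 0} is finite, where F₀(s) = 1 − a·exp(−τ₀s) − ∫₀^{τ₀} N(ν)exp(−νs)dν. -/
open MeasureTheory Set

noncomputable section

open Filter

private lemma exp_neg_lip {x y : ℝ} (hx : 0 ≤ x) (hy : 0 ≤ y) :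
    |Real.exp (-x) - Real.exp (-y)| ≤ |x - y| := by
  wlog h : x ≤ y generalizing x y
  · rw [abs_sub_comm, abs_sub_comm x y]; exact this hy hx (le_of_not_ge h)
  have h1 : Real.exp (-y) ≤ Real.exp (-x) := Real.exp_le_exp.mpr (by linarith)
  rw [abs_of_nonneg (by linarith), abs_of_nonpos (by linarith)]
  have h2 : Real.exp (-x) - Real.exp (-y) = Real.exp (-x) * (1 - Real.exp (-(y - x))) := by
    rw [mul_sub, mul_one, ← Real.exp_add]; ring_nf
  rw [h2]
  have h3 : 1 - Real.exp (-(y - x)) ≤ y - x := by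
    have := Real.add_one_le_exp (-(y - x)); linarith
  have h4 : Real.exp (-x) ≤ 1 := Real.exp_le_one_iff.mpr (by linarith)
  have h5 : 0 ≤ 1 - Real.exp (-(y - x)) := by
    have : Real.exp (-(y-x)) ≤ 1 := Real.exp_le_one_iff.mpr (by linarith)
    linarith
  calc Real.exp (-x) * (1 - Real.exp (-(y - x))) ≤ 1 * (y - x) :=
        mul_le_mul h4 h3 h5 one_pos.le
    _ = -(x - y) := by ring

private lemma exp_split (ν : ℝ) (s : ℂ) :
    Complex.exp (-(ν:ℂ) * s)
      = (Real.exp (-(ν * s.re)) : ℝ) * Complex.exp ((-(ν * s.im) : ℝ) * Complex.I) := by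
  rw [Complex.ofReal_exp, ← Complex.exp_add]
  congr 1
  apply Complex.ext <;> simp

private lemma norm_exp_eq (ν : ℝ) (s : ℂ) :
    ‖Complex.exp (-(ν:ℂ) * s)‖ = Real.exp (-(ν * s.re)) := by
  rw [Complex.norm_exp]
  congr 1
  simp [Complex.neg_re, Complex.ofReal_mul]

private lemma aux_asm {N : ℝ → ℝ} {τ₀ : ℝ} (hN : PwContOn N 0 τ₀) :
    AEStronglyMeasurable N (volume.restrict (Set.Ioc 0 τ₀)) := by
  obtain ⟨⟨S, hS⟩, -⟩ := hN
  have hmeas : MeasurableSet (Set.Icc (0:ℝ) τ₀ \ ↑S) :=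
    measurableSet_Icc.diff (S.finite_toSet.measurableSet)
  have h1 : AEStronglyMeasurable N (volume.restrict (Set.Icc (0:ℝ) τ₀ \ ↑S)) :=
    hS.aestronglyMeasurable hmeas
  have h0 : (volume : Measure ℝ) ↑S = 0 := S.finite_toSet.measure_zero _
  have heq : volume.restrict (Set.Icc (0:ℝ) τ₀ \ ↑S) = volume.restrict (Set.Icc 0 τ₀) :=
    Measure.restrict_congr_set (diff_ae_eq_self.mpr (measure_mono_null Set.inter_subset_right h0))
  rw [heq] at h1
  exact h1.mono_measure (Measure.restrict_mono Set.Ioc_subset_Icc_self le_rfl)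
private lemma aux_kasm {N : ℝ → ℝ} {τ₀ : ℝ}
    (hasm : AEStronglyMeasurable N (volume.restrict (Set.Ioc 0 τ₀))) (s : ℂ) :
    AEStronglyMeasurable (fun ν : ℝ => (N ν : ℂ) * Complex.exp (-(ν:ℂ) * s))
      (volume.restrict (Set.Ioc 0 τ₀)) :=
  (Complex.continuous_ofReal.comp_aestronglyMeasurable hasm).mul
    (Continuous.aestronglyMeasurable (by fun_prop))

private lemma aux_int {N : ℝ → ℝ} {τ₀ C : ℝ} (hτ₀ : 0 < τ₀)
    (hasm : AEStronglyMeasurable N (volume.restrict (Set.Ioc 0 τ₀)))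
    (hC : ∀ x ∈ Set.Icc 0 τ₀, |N x| ≤ C) (s : ℂ) :
    IntegrableOn (fun ν : ℝ => (N ν : ℂ) * Complex.exp (-(ν:ℂ) * s)) (Set.Ioc 0 τ₀) := by
  refine Integrable.mono' (g := fun _ => C * Real.exp (τ₀ * |s.re|))
    (integrableOn_const measure_Ioc_lt_top.ne) (aux_kasm hasm s) ?_
  rw [ae_restrict_iff' measurableSet_Ioc]
  refine ae_of_all _ fun ν hν => ?_
  rw [norm_mul, norm_exp_eq, Complex.norm_real, Real.norm_eq_abs]
  have h1 : |N ν| ≤ C := hC ν ⟨hν.1.le, hν.2⟩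
  have h2 : Real.exp (-(ν * s.re)) ≤ Real.exp (τ₀ * |s.re|) := by
    apply Real.exp_le_exp.mpr
    calc -(ν * s.re) ≤ |ν * s.re| := neg_le_abs _
      _ = ν * |s.re| := by rw [abs_mul, abs_of_pos hν.1]
      _ ≤ τ₀ * |s.re| := by nlinarith [abs_nonneg s.re, hν.2]
  exact mul_le_mul h1 h2 (Real.exp_pos _).le (le_trans (abs_nonneg _) h1)

private lemma aux_iint {N : ℝ → ℝ} {τ₀ C : ℝ} (hτ₀ : 0 < τ₀)
    (hasm : AEStronglyMeasurable N (volume.restrict (Set.Ioc 0 τ₀)))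
    (hC : ∀ x ∈ Set.Icc 0 τ₀, |N x| ≤ C) (s : ℂ) :
    IntervalIntegrable (fun ν : ℝ => (N ν : ℂ) * Complex.exp (-(ν:ℂ) * s)) volume 0 τ₀ := by
  rw [intervalIntegrable_iff_integrableOn_Ioc_of_le hτ₀.le]
  exact aux_int hτ₀ hasm hC s
private lemma aux_C0 {N : ℝ → ℝ} {τ₀ C : ℝ} (hτ₀ : 0 < τ₀)
    (hC : ∀ x ∈ Set.Icc 0 τ₀, |N x| ≤ C) : 0 ≤ C :=
  le_trans (abs_nonneg _) (hC 0 ⟨le_refl 0, hτ₀.le⟩)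

set_option maxHeartbeats 1000000 in
private lemma aux_entire {N : ℝ → ℝ} {τ₀ C : ℝ} (a : ℝ) (hτ₀ : 0 < τ₀)
    (hasm : AEStronglyMeasurable N (volume.restrict (Set.Ioc 0 τ₀)))
    (hC : ∀ x ∈ Set.Icc 0 τ₀, |N x| ≤ C) :
    Differentiable ℂ (F0 a τ₀ N) := by
  have hI : Differentiable ℂ
      (fun s : ℂ => ∫ ν in (0:ℝ)..τ₀, (N ν : ℂ) * Complex.exp (-(ν:ℂ) * s)) := by
    intro s₀
    have huIoc : Set.uIoc (0:ℝ) τ₀ = Set.Ioc 0 τ₀ := Set.uIoc_of_le hτ₀.le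
    have hmeas : ∀ᶠ s in nhds s₀, AEStronglyMeasurable
        (fun ν : ℝ => (N ν : ℂ) * Complex.exp (-(ν:ℂ) * s)) (volume.restrict (Set.uIoc (0:ℝ) τ₀)) := by
      refine Filter.Eventually.of_forall fun s => ?_
      rw [huIoc]; exact aux_kasm hasm s
    have hmeas' : AEStronglyMeasurable
        (fun ν : ℝ => ((N ν : ℂ) * Complex.exp (-(ν:ℂ) * s₀)) * (-(ν:ℂ)))
        (volume.restrict (Set.uIoc (0:ℝ) τ₀)) := by
      rw [huIoc]
      exact (aux_kasm hasm s₀).mul (Continuous.aestronglyMeasurable (by fun_prop))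
    have hbound : ∀ᵐ ν ∂(volume : Measure ℝ), ν ∈ Set.uIoc (0:ℝ) τ₀ → ∀ s ∈ Metric.ball s₀ 1,
        ‖((N ν : ℂ) * Complex.exp (-(ν:ℂ) * s)) * (-(ν:ℂ))‖
          ≤ C * (Real.exp (τ₀ * (‖s₀‖ + 1)) * τ₀) := by
      refine ae_of_all _ fun ν hν s hs => ?_
      rw [huIoc] at hν
      rw [norm_mul, norm_mul, norm_exp_eq, norm_neg, Complex.norm_real, Complex.norm_real,
        Real.norm_eq_abs, Real.norm_eq_abs]
      have h1 : |N ν| ≤ C := hC ν ⟨hν.1.le, hν.2⟩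
      have hC0 : 0 ≤ C := le_trans (abs_nonneg _) h1
      have hsre : |s.re| ≤ ‖s₀‖ + 1 := by
        have h2 : ‖s‖ ≤ ‖s₀‖ + 1 := by
          have h3 := mem_ball_iff_norm.mp hs
          calc ‖s‖ = ‖s₀ + (s - s₀)‖ := by ring_nf
            _ ≤ ‖s₀‖ + ‖s - s₀‖ := norm_add_le _ _
            _ ≤ ‖s₀‖ + 1 := by linarith
        exact le_trans (Complex.abs_re_le_norm s) h2
      have h2 : Real.exp (-(ν * s.re)) ≤ Real.exp (τ₀ * (‖s₀‖ + 1)) := by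
        apply Real.exp_le_exp.mpr
        calc -(ν * s.re) ≤ |ν * s.re| := neg_le_abs _
          _ = ν * |s.re| := by rw [abs_mul, abs_of_pos hν.1]
          _ ≤ τ₀ * (‖s₀‖ + 1) := by nlinarith [abs_nonneg s.re, hν.2, hν.1]
      rw [abs_of_pos hν.1, ← mul_assoc]
      have h4 : |N ν| * Real.exp (-(ν * s.re)) ≤ C * Real.exp (τ₀ * (‖s₀‖ + 1)) :=
        mul_le_mul h1 h2 (Real.exp_pos _).le hC0
      exact mul_le_mul h4 hν.2 hν.1.le (by positivity)
    have hdiff : ∀ᵐ ν ∂(volume : Measure ℝ), ν ∈ Set.uIoc (0:ℝ) τ₀ → ∀ s ∈ Metric.ball s₀ 1,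
        HasDerivAt (fun s : ℂ => (N ν : ℂ) * Complex.exp (-(ν:ℂ) * s))
          (((N ν : ℂ) * Complex.exp (-(ν:ℂ) * s)) * (-(ν:ℂ))) s := by
      refine ae_of_all _ fun ν hν s hs => ?_
      have hd : HasDerivAt (fun s : ℂ => -(ν:ℂ) * s) (-(ν:ℂ)) s := by
        simpa using (hasDerivAt_id s).const_mul (-(ν:ℂ))
      simpa [mul_assoc] using (hd.cexp).const_mul ((N ν : ℂ))
    have key := intervalIntegral.hasDerivAt_integral_of_dominated_loc_of_deriv_le
      (F' := fun (s : ℂ) (ν : ℝ) => ((N ν : ℂ) * Complex.exp (-(ν:ℂ) * s)) * (-(ν:ℂ)))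
      (Metric.ball_mem_nhds s₀ one_pos) hmeas (aux_iint hτ₀ hasm hC s₀) hmeas' hbound
      (intervalIntegrable_const) hdiff
    exact key.2.differentiableAt
  have h2 : Differentiable ℂ (fun s : ℂ => (a:ℂ) * Complex.exp (-(τ₀:ℂ) * s)) := by fun_prop
  exact fun s => (((differentiable_const (1:ℂ)).sub h2).sub hI) s
private lemma aux_tendsto_re {N : ℝ → ℝ} {τ₀ C : ℝ} (hτ₀ : 0 < τ₀)
    (hasm : AEStronglyMeasurable N (volume.restrict (Set.Ioc 0 τ₀)))
    (hC : ∀ x ∈ Set.Icc 0 τ₀, |N x| ≤ C)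
    (u : ℕ → ℂ) (hre0 : ∀ n, 0 ≤ (u n).re)
    (hre : Tendsto (fun n => (u n).re) atTop atTop) :
    Tendsto (fun n => ∫ ν in (0:ℝ)..τ₀, (N ν : ℂ) * Complex.exp (-(ν:ℂ) * u n))
      atTop (nhds 0) := by
  simp_rw [intervalIntegral.integral_of_le hτ₀.le]
  have key := MeasureTheory.tendsto_integral_of_dominated_convergence
    (μ := volume.restrict (Set.Ioc 0 τ₀))
    (F := fun n (ν : ℝ) => (N ν : ℂ) * Complex.exp (-(ν:ℂ) * u n))
    (f := fun _ => (0:ℂ)) (fun _ => C)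
    (fun n => aux_kasm hasm (u n))
    (integrable_const C)
    (fun n => by
      rw [ae_restrict_iff' measurableSet_Ioc]
      refine ae_of_all _ fun ν hν => ?_
      rw [norm_mul, norm_exp_eq, Complex.norm_real, Real.norm_eq_abs]
      have h1 : |N ν| ≤ C := hC ν ⟨hν.1.le, hν.2⟩
      have h2 : Real.exp (-(ν * (u n).re)) ≤ 1 :=
        Real.exp_le_one_iff.mpr (by nlinarith [hre0 n, hν.1])
      calc |N ν| * Real.exp (-(ν * (u n).re)) ≤ C * 1 :=
            mul_le_mul h1 h2 (Real.exp_pos _).le (le_trans (abs_nonneg _) h1)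
        _ = C := mul_one C)
    (by
      rw [ae_restrict_iff' measurableSet_Ioc]
      refine ae_of_all _ fun ν hν => ?_
      have hnorm : ∀ n, ‖(N ν : ℂ) * Complex.exp (-(ν:ℂ) * u n)‖
          = |N ν| * Real.exp (-(ν * (u n).re)) := fun n => by
        rw [norm_mul, norm_exp_eq, Complex.norm_real, Real.norm_eq_abs]
      refine squeeze_zero_norm (fun n => (hnorm n).le) ?_
      have h3 : Tendsto (fun n => -(ν * (u n).re)) atTop atBot := by
        apply Filter.tendsto_neg_atBot_iff.mpr
        exact Filter.Tendsto.const_mul_atTop hν.1 hre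
      have h4 : Tendsto (fun n => Real.exp (-(ν * (u n).re))) atTop (nhds 0) :=
        Real.tendsto_exp_atBot.comp h3
      have := tendsto_const_nhds (x := |N ν|) (f := atTop (α := ℕ)) |>.mul h4
      simpa using this)
  simpa using key

private lemma aux_no_far {N : ℝ → ℝ} {τ₀ C a : ℝ} (hτ₀ : 0 < τ₀)
    (hasm : AEStronglyMeasurable N (volume.restrict (Set.Ioc 0 τ₀)))
    (hC : ∀ x ∈ Set.Icc 0 τ₀, |N x| ≤ C)
    (h : ∀ n : ℕ, ∃ s : ℂ, 0 ≤ s.re ∧ F0 a τ₀ N s = 0 ∧ (n:ℝ) ≤ s.re) : False := by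
  choose u h1 h2 h3 using h
  have hre : Tendsto (fun n => (u n).re) atTop atTop :=
    tendsto_atTop_mono h3 tendsto_natCast_atTop_atTop
  have hint := aux_tendsto_re hτ₀ hasm hC u h1 hre
  have hexp : Tendsto (fun n => (a:ℂ) * Complex.exp (-(τ₀:ℂ) * u n)) atTop (nhds 0) := by
    refine squeeze_zero_norm (a := fun n => |a| * Real.exp (-(τ₀ * (u n).re))) ?_ ?_
    · intro n
      rw [norm_mul, norm_exp_eq, Complex.norm_real, Real.norm_eq_abs]
    · have h3' : Tendsto (fun n => -(τ₀ * (u n).re)) atTop atBot :=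
        Filter.tendsto_neg_atBot_iff.mpr (Filter.Tendsto.const_mul_atTop hτ₀ hre)
      have h4 := Real.tendsto_exp_atBot.comp h3'
      have := tendsto_const_nhds (x := |a|) (f := atTop (α := ℕ)) |>.mul h4
      simpa using this
  have hF : Tendsto (fun n => F0 a τ₀ N (u n)) atTop (nhds (1 - 0 - 0)) := by
    unfold F0
    exact (tendsto_const_nhds.sub hexp).sub hint
  have hF0 : Tendsto (fun n => F0 a τ₀ N (u n)) atTop (nhds 0) := by
    simp_rw [fun n => h2 n]
    exact tendsto_const_nhds
  have := tendsto_nhds_unique hF hF0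
  simp at this
set_option maxHeartbeats 1000000 in
private lemma aux_strip {N : ℝ → ℝ} {τ₀ C : ℝ} (hτ₀ : 0 < τ₀)
    (hasm : AEStronglyMeasurable N (volume.restrict (Set.Ioc 0 τ₀)))
    (hC : ∀ x ∈ Set.Icc 0 τ₀, |N x| ≤ C)
    (u : ℕ → ℂ) (σs : ℝ) (hσs : 0 ≤ σs) (hre0 : ∀ n, 0 ≤ (u n).re)
    (hσ : Tendsto (fun n => (u n).re) atTop (nhds σs))
    (him : Tendsto (fun n => |(u n).im|) atTop atTop) :
    Tendsto (fun n => ∫ ν in (0:ℝ)..τ₀, (N ν : ℂ) * Complex.exp (-(ν:ℂ) * u n))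
      atTop (nhds 0) := by
  have hC0 : 0 ≤ C := le_trans (abs_nonneg _) (hC 0 ⟨le_refl 0, hτ₀.le⟩)
  set v : ℕ → ℂ := fun n => (σs : ℂ) + (u n).im * Complex.I with hv
  have hvre : ∀ n, (v n).re = σs := by intro n; simp [hv]
  have hvim : ∀ n, (v n).im = (u n).im := by intro n; simp [hv]
  -- Riemann–Lebesgue part
  have hA : Tendsto (fun n => ∫ ν in (0:ℝ)..τ₀, (N ν : ℂ) * Complex.exp (-(ν:ℂ) * v n))
      atTop (nhds 0) := by
    set g : ℝ → ℂ :=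
      (Set.Ioc 0 τ₀).indicator (fun ν => (N ν : ℂ) * Complex.exp (-(ν:ℂ) * (σs:ℂ))) with hg
    have hRL := Real.tendsto_integral_exp_smul_cocompact g
    have hw : Tendsto (fun n => (u n).im / (2 * Real.pi)) atTop (cocompact ℝ) := by
      rw [← Metric.cobounded_eq_cocompact, ← tendsto_norm_atTop_iff_cobounded]
      have habs : ∀ n, ‖(u n).im / (2 * Real.pi)‖ = |(u n).im| / (2 * Real.pi) := fun n => by
        rw [Real.norm_eq_abs, abs_div, abs_of_pos Real.two_pi_pos]
      simp_rw [habs]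
      exact him.atTop_div_const (by positivity)
    have hcomp := hRL.comp hw
    have hid : ∀ n, (∫ x : ℝ, Real.fourierChar (-(x * ((u n).im / (2 * Real.pi)))) • g x)
        = ∫ ν in (0:ℝ)..τ₀, (N ν : ℂ) * Complex.exp (-(ν:ℂ) * v n) := by
      intro n
      have hpt : (fun x : ℝ => Real.fourierChar (-(x * ((u n).im / (2 * Real.pi)))) • g x)
          = (Set.Ioc 0 τ₀).indicator
              (fun x => (N x : ℂ) * Complex.exp (-(x:ℂ) * v n)) := by
        funext x
        by_cases hx : x ∈ Set.Ioc 0 τ₀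
        · rw [hg, Set.indicator_of_mem hx, Set.indicator_of_mem hx]
          rw [Circle.smul_def, Real.fourierChar_apply]
          have h2π : 2 * Real.pi * (-(x * ((u n).im / (2 * Real.pi)))) = -(x * (u n).im) := by
            field_simp
          rw [h2π]
          have hvn : -(x:ℂ) * v n = ((-(x * (u n).im) : ℝ) : ℂ) * Complex.I
              + (-(x:ℂ) * (σs:ℂ)) := by
            rw [hv]; push_cast; ring
          rw [hvn, Complex.exp_add, smul_eq_mul]; ring
        · rw [hg, Set.indicator_of_notMem hx, Set.indicator_of_notMem hx, smul_zero]
      rw [hpt, MeasureTheory.integral_indicator measurableSet_Ioc,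
        intervalIntegral.integral_of_le hτ₀.le]
    have heq : ((fun w => ∫ x : ℝ, Real.fourierChar (-(x * w)) • g x)
        ∘ fun n => (u n).im / (2 * Real.pi))
        = fun n => ∫ ν in (0:ℝ)..τ₀, (N ν : ℂ) * Complex.exp (-(ν:ℂ) * v n) :=
      funext fun n => hid n
    rw [heq] at hcomp
    exact hcomp
  -- difference part
  have hD : Tendsto (fun n => (∫ ν in (0:ℝ)..τ₀, (N ν : ℂ) * Complex.exp (-(ν:ℂ) * u n))
      - ∫ ν in (0:ℝ)..τ₀, (N ν : ℂ) * Complex.exp (-(ν:ℂ) * v n)) atTop (nhds 0) := by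
    refine squeeze_zero_norm (a := fun n => (C * (τ₀ * |(u n).re - σs|)) * |τ₀ - 0|) ?_ ?_
    · intro n
      rw [← intervalIntegral.integral_sub (aux_iint hτ₀ hasm hC (u n))
        (aux_iint hτ₀ hasm hC (v n))]
      refine intervalIntegral.norm_integral_le_of_norm_le_const fun ν hν => ?_
      rw [Set.uIoc_of_le hτ₀.le] at hν
      rw [← mul_sub, norm_mul, Complex.norm_real, Real.norm_eq_abs]
      have hsplit : Complex.exp (-(ν:ℂ) * u n) - Complex.exp (-(ν:ℂ) * v n)
          = (((Real.exp (-(ν * (u n).re)) : ℝ) : ℂ) - ((Real.exp (-(ν * σs)) : ℝ) : ℂ))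
            * Complex.exp ((-(ν * (u n).im) : ℝ) * Complex.I) := by
        rw [exp_split ν (u n), exp_split ν (v n), hvre, hvim, sub_mul]
      rw [hsplit]
      simp only [norm_mul, Complex.norm_exp_ofReal_mul_I, mul_one,
        ← Complex.ofReal_sub, Complex.norm_real, Real.norm_eq_abs]
      have h1 : |N ν| ≤ C := hC ν ⟨hν.1.le, hν.2⟩
      have h2 : |Real.exp (-(ν * (u n).re)) - Real.exp (-(ν * σs))|
          ≤ τ₀ * |(u n).re - σs| := by
        calc |Real.exp (-(ν * (u n).re)) - Real.exp (-(ν * σs))|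
            ≤ |ν * (u n).re - ν * σs| :=
              exp_neg_lip (by nlinarith [hre0 n, hν.1]) (by nlinarith [hν.1]) 
          _ = ν * |(u n).re - σs| := by rw [← mul_sub, abs_mul, abs_of_pos hν.1]
          _ ≤ τ₀ * |(u n).re - σs| := by nlinarith [abs_nonneg ((u n).re - σs), hν.2]
      exact mul_le_mul h1 h2 (abs_nonneg _) hC0
    · have h3 : Tendsto (fun n => (C * (τ₀ * |(u n).re - σs|)) * |τ₀ - 0|)
          atTop (nhds ((C * (τ₀ * |σs - σs|)) * |τ₀ - 0|)) := by
        refine Filter.Tendsto.mul_const _ ?_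
        exact tendsto_const_nhds.mul (tendsto_const_nhds.mul ((hσ.sub tendsto_const_nhds).abs))
      simpa using h3
  have hsum := hD.add hA
  simp only [sub_add_cancel] at hsum
  simpa using hsum
/-- **Finitely many unstable roots of the open loop.** If `|a| < 1`, the set of roots of
`F₀` in the closed right half-plane is finite. -/
theorem stmt18
    (τ₀ a : ℝ) (N : ℝ → ℝ)
    (hτ₀ : 0 < τ₀) (ha : -1 < a ∧ a < 1)
    (hN : PwContOn N 0 τ₀) :
    {s : ℂ | 0 ≤ s.re ∧ F0 a τ₀ N s = 0}.Finite := by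
  set Z := {s : ℂ | 0 ≤ s.re ∧ F0 a τ₀ N s = 0} with hZ
  by_contra hfin
  have hinf : Z.Infinite := hfin
  have hasm := aux_asm hN
  obtain ⟨-, C, hC⟩ := hN
  have haa : |a| < 1 := abs_lt.mpr ha
  have hfar := aux_no_far (a := a) hτ₀ hasm hC
  have hBex : ∃ B : ℕ, ∀ s ∈ Z, s.re < (B:ℝ) := by
    by_contra hcon
    push_neg at hcon
    exact hfar fun n => by
      obtain ⟨s, hs, hs2⟩ := hcon n
      exact ⟨s, hs.1, hs.2, hs2⟩
  obtain ⟨B, hB⟩ := hBex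
  by_cases hbdd : ∃ R, Z ⊆ Metric.closedBall 0 R
  · obtain ⟨R, hR⟩ := hbdd
    obtain ⟨x, -, hacc⟩ := hinf.exists_accPt_of_subset_isCompact
      (isCompact_closedBall 0 R) hR
    have hfreq0 := accPt_iff_frequently.mp hacc
    have hfreq : ∃ᶠ z in nhdsWithin x {x}ᶜ, F0 a τ₀ N z = 0 := by
      rw [frequently_nhdsWithin_iff]
      exact hfreq0.mono fun y hy => ⟨hy.2.2, hy.1⟩
    have hana : AnalyticOnNhd ℂ (F0 a τ₀ N) Set.univ :=
      (aux_entire a hτ₀ hasm hC).differentiableOn.analyticOnNhd isOpen_univ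
    have hzero := hana.eqOn_zero_of_preconnected_of_frequently_eq_zero
      isPreconnected_univ (Set.mem_univ x) hfreq
    exact hfar fun n => ⟨(n:ℂ), by simp,
      by simpa using hzero (Set.mem_univ ((n:ℕ):ℂ)), by simp⟩
  · push_neg at hbdd
    have hex : ∀ n : ℕ, ∃ s, s ∈ Z ∧ s ∉ Metric.closedBall (0:ℂ) n := fun n => by
      obtain ⟨s, hs1, hs2⟩ := Set.not_subset.mp (hbdd n); exact ⟨s, hs1, hs2⟩
    choose u hu1 hu2 using hex
    have hnorm : ∀ n : ℕ, (n:ℝ) < ‖u n‖ := fun n => by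
      have h := hu2 n
      rw [Metric.mem_closedBall, dist_zero_right] at h
      exact not_le.mp h
    have hre0 : ∀ n, 0 ≤ (u n).re := fun n => (hu1 n).1
    have hreB : ∀ n, (u n).re ≤ (B:ℝ) := fun n => (hB _ (hu1 n)).le
    have him : Tendsto (fun n => |(u n).im|) atTop atTop := by
      apply tendsto_atTop_mono (f := fun n : ℕ => (n:ℝ) + -(B:ℝ))
      · intro n
        have h1 : ‖u n‖ ≤ |(u n).re| + |(u n).im| :=
          Complex.norm_le_abs_re_add_abs_im (u n)
        have h2 : |(u n).re| ≤ (B:ℝ) :=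
          abs_le.mpr ⟨by linarith [hre0 n, Nat.cast_nonneg (α := ℝ) B], hreB n⟩
        have h3 := hnorm n
        linarith
      · exact tendsto_atTop_add_const_right atTop _ tendsto_natCast_atTop_atTop
    obtain ⟨σs, hσsmem, φ, hφ, hconv⟩ :=
      (isCompact_Icc (a := (0:ℝ)) (b := (B:ℝ))).tendsto_subseq
        (x := fun n => (u n).re) (fun n => ⟨hre0 n, hreB n⟩)
    have hstrip := aux_strip hτ₀ hasm hC (u ∘ φ) σs hσsmem.1 (fun n => hre0 (φ n))
      hconv (him.comp hφ.tendsto_atTop)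
    have hzero : ∀ n, F0 a τ₀ N (u (φ n)) = 0 := fun n => (hu1 (φ n)).2
    have hkey : ∀ n, (1:ℂ) - (a:ℂ) * Complex.exp (-(τ₀:ℂ) * (u (φ n)))
        = ∫ ν in (0:ℝ)..τ₀, (N ν : ℂ) * Complex.exp (-(ν:ℂ) * (u (φ n))) := fun n => by
      have h := hzero n
      unfold F0 at h
      exact sub_eq_zero.mp h
    have hlim : Tendsto (fun n => (1:ℂ) - (a:ℂ) * Complex.exp (-(τ₀:ℂ) * (u (φ n))))
        atTop (nhds 0) := by
      simp_rw [hkey]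
      exact hstrip
    have hlimnorm : Tendsto
        (fun n => ‖(1:ℂ) - (a:ℂ) * Complex.exp (-(τ₀:ℂ) * (u (φ n)))‖) atTop (nhds 0) := by
      simpa using hlim.norm
    have hlower : ∀ n, 1 - |a|
        ≤ ‖(1:ℂ) - (a:ℂ) * Complex.exp (-(τ₀:ℂ) * (u (φ n)))‖ := fun n => by
      have h1 : ‖(a:ℂ) * Complex.exp (-(τ₀:ℂ) * (u (φ n)))‖ ≤ |a| := by
        rw [norm_mul, norm_exp_eq, Complex.norm_real, Real.norm_eq_abs]
        have h2 : Real.exp (-(τ₀ * (u (φ n)).re)) ≤ 1 :=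
          Real.exp_le_one_iff.mpr (by nlinarith [hre0 (φ n)])
        calc |a| * Real.exp (-(τ₀ * (u (φ n)).re)) ≤ |a| * 1 :=
              mul_le_mul_of_nonneg_left h2 (abs_nonneg a)
          _ = |a| := mul_one _
      calc 1 - |a| ≤ ‖(1:ℂ)‖ - ‖(a:ℂ) * Complex.exp (-(τ₀:ℂ) * (u (φ n)))‖ := by
            rw [norm_one]; linarith
        _ ≤ ‖(1:ℂ) - (a:ℂ) * Complex.exp (-(τ₀:ℂ) * (u (φ n)))‖ := norm_sub_norm_le _ _
    have hcontra : 1 - |a| ≤ 0 := ge_of_tendsto' hlimnorm hlower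
    linarith
end
end
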